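/- arXiv:1701.04238 — 5 statements merged into one kernel-verified Lean document; each statement's English description precedes it below -/
import Mathlib

section
/- The greedy algorithm for dominating set produces a dominating set D' with |D'| ≤ γ(G)·(1 + ln(Δ+1)), where γ(G) is the domination number and Δ is the maximum degree of G. -/
variable {V : Type*} [Fintype V] [DecidableEq V]

/-- The closed neighborhood of a vertex: the set of vertices it dominates. -/
def closedNbhd (G : SimpleGraph V) [DecidableRel G.Adj] (v : V) : Finset V :=
  insert v (G.neighborFinset v)

/-- The set of vertices dominated by a set `S` of chosen vertices. -/
def dominatedBy (G : SimpleGraph V) [DecidableRel G.Adj] (S : Finset V) : Finset V :=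
  S.biUnion (closedNbhd G)

/-- `U` is a dominating set of `G`. -/
def IsDominatingSet (G : SimpleGraph V) (U : Finset V) : Prop :=
  ∀ v : V, v ∈ U ∨ ∃ u ∈ U, G.Adj u v

/-- The domination number `γ(G)`. -/
noncomputable def dominationNumber (G : SimpleGraph V) : ℕ :=
  sInf {n | ∃ U : Finset V, U.card = n ∧ IsDominatingSet G U}

/-- `l` is a run of the greedy dominating-set algorithm: each selected vertex newly
dominates a maximal (and positive) number of currently undominated vertices, and at the
end every vertex is dominated. -/
def IsGreedyRun (G : SimpleGraph V) [DecidableRel G.Adj] (l : List V) : Prop :=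
  (∀ i : Fin l.length,
      (closedNbhd G (l.get i) \ dominatedBy G (l.take i).toFinset).Nonempty ∧
      ∀ v : V, (closedNbhd G v \ dominatedBy G (l.take i).toFinset).card ≤
        (closedNbhd G (l.get i) \ dominatedBy G (l.take i).toFinset).card) ∧
    dominatedBy G l.toFinset = Finset.univ

/-- real-valued harmonic number -/
noncomputable def Hr (n : ℕ) : ℝ := ∑ i ∈ Finset.range n, ((i : ℝ) + 1)⁻¹

lemma Hr_key {a b k c : ℕ} (hba : b + k ≤ a) (hac : a ≤ c) (hc : 1 ≤ c) :
    (k : ℝ) / c ≤ Hr a - Hr b := by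
  have hb : b ≤ a := le_trans (Nat.le_add_right b k) hba
  have : Hr a - Hr b = ∑ i ∈ Finset.Ico b a, ((i : ℝ) + 1)⁻¹ := by
    rw [Hr, Hr, Finset.sum_Ico_eq_sub _ hb]
  rw [this]
  have h1 : ∑ i ∈ Finset.Ico b a, ((c : ℝ))⁻¹ ≤ ∑ i ∈ Finset.Ico b a, ((i : ℝ) + 1)⁻¹ := by
    refine Finset.sum_le_sum fun i hi => ?_
    have hi' := (Finset.mem_Ico.mp hi).2
    have : (i : ℝ) + 1 ≤ c := by
      have : i + 1 ≤ c := le_trans hi' hac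
      exact_mod_cast this
    refine inv_anti₀ (by positivity) this
  refine le_trans ?_ h1
  rw [Finset.sum_const, Nat.card_Ico, nsmul_eq_mul, div_eq_mul_inv]
  have hk : (k : ℝ) ≤ ((a - b : ℕ) : ℝ) := by
    have : k ≤ a - b := Nat.le_sub_of_add_le (by omega)
    exact_mod_cast this
  have : (0:ℝ) ≤ ((c:ℝ))⁻¹ := by positivity
  exact mul_le_mul_of_nonneg_right hk this

lemma Hr_mono : Monotone Hr := fun a b h =>
  Finset.sum_le_sum_of_subset_of_nonneg (Finset.range_subset_range.mpr h)
    (fun i _ _ => by positivity)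

lemma Hr_le (n : ℕ) : Hr n ≤ 1 + Real.log n := by
  have : Hr n = ((harmonic n : ℚ) : ℝ) := by
    rw [Hr, harmonic]
    push_cast
    rfl
  rw [this]
  exact harmonic_le_one_add_log n

/-- The greedy algorithm produces a dominating set `D'` with
`|D'| ≤ γ(G) · (1 + ln(Δ+1))`, where `Δ` is the maximum degree. -/
theorem greedy_dominating_set_bound (G : SimpleGraph V) [DecidableRel G.Adj]
    (hΔ : 1 ≤ G.maxDegree) (l : List V) (hl : IsGreedyRun G l) :
    IsDominatingSet G l.toFinset ∧
      (l.length : ℝ) ≤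
        (dominationNumber G : ℝ) * (1 + Real.log ((G.maxDegree : ℝ) + 1)) := by
  obtain ⟨hgreedy, hcover⟩ := hl
  -- part 1
  have hdom : IsDominatingSet G l.toFinset := by
    intro v
    have hv : v ∈ dominatedBy G l.toFinset := hcover ▸ Finset.mem_univ v
    obtain ⟨u, hu, hvu⟩ := Finset.mem_biUnion.mp hv
    rcases Finset.mem_insert.mp hvu with h | h
    · exact Or.inl (h ▸ hu)
    · exact Or.inr ⟨u, hu, (SimpleGraph.mem_neighborFinset _ _ _).mp h⟩
  refine ⟨hdom, ?_⟩
  -- optimal dominating set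
  have hmem : dominationNumber G ∈ {n | ∃ U : Finset V, U.card = n ∧ IsDominatingSet G U} :=
    Nat.sInf_mem ⟨Finset.univ.card, Finset.univ, rfl, fun v => Or.inl (Finset.mem_univ v)⟩
  obtain ⟨U, hUcard, hU⟩ := hmem
  set L := l.length with hL
  set D : ℕ → Finset V := fun i => dominatedBy G (l.take i).toFinset with hD
  -- basic facts
  have hDsucc : ∀ i : Fin L, D (i + 1) = D i ∪ closedNbhd G (l.get i) := by
    intro i
    have h1 : l.take (i + 1) = l.take i ++ [l.get i] := by
      rw [← List.take_concat_get i.isLt, List.concat_eq_append]; rfl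
    ext v
    simp only [hD, dominatedBy, Finset.mem_biUnion, Finset.mem_union, List.mem_toFinset, h1,
      List.mem_append, List.mem_singleton]
    constructor
    · rintro ⟨u, hu | hu, hv⟩
      · exact Or.inl ⟨u, hu, hv⟩
      · exact Or.inr (hu ▸ hv)
    · rintro (⟨u, hu, hv⟩ | hv)
      · exact ⟨u, Or.inl hu, hv⟩
      · exact ⟨l.get i, Or.inr rfl, hv⟩
  have hDL : D L = Finset.univ := by
    rw [hD, hL]; simp only [List.take_length]; exact hcover
  -- notation for step sets
  set N : Fin L → Finset V := fun i => closedNbhd G (l.get i) \ D i with hN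
  have hNpos : ∀ i : Fin L, 1 ≤ (N i).card := fun i => Finset.card_pos.mpr (hgreedy i).1
  -- main chain
  have step1 : (L : ℝ) ≤ ∑ w ∈ U, ∑ i : Fin L, ((N i ∩ closedNbhd G w).card : ℝ) / (N i).card := by
    rw [Finset.sum_comm]
    have : (L : ℝ) = ∑ i : Fin L, (1 : ℝ) := by simp
    rw [this]
    refine Finset.sum_le_sum fun i _ => ?_
    have hsub : N i ⊆ U.biUnion fun w => N i ∩ closedNbhd G w := by
      intro v hv
      rcases hU v with h | ⟨u, hu, huv⟩
      · exact Finset.mem_biUnion.mpr ⟨v, h, Finset.mem_inter.mpr ⟨hv, Finset.mem_insert_self _ _⟩⟩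
      · exact Finset.mem_biUnion.mpr ⟨u, hu, Finset.mem_inter.mpr ⟨hv,
          Finset.mem_insert_of_mem ((SimpleGraph.mem_neighborFinset _ _ _).mpr huv)⟩⟩
    have hcard : (N i).card ≤ ∑ w ∈ U, (N i ∩ closedNbhd G w).card :=
      le_trans (Finset.card_le_card hsub) (Finset.card_biUnion_le)
    have hcpos : (0:ℝ) < (N i).card := by exact_mod_cast hNpos i
    rw [← Finset.sum_div, le_div_iff₀ hcpos, one_mul]
    exact_mod_cast hcard
  have step2 : ∀ w ∈ U, ∑ i : Fin L, ((N i ∩ closedNbhd G w).card : ℝ) / (N i).card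
      ≤ 1 + Real.log ((G.maxDegree : ℝ) + 1) := by
    intro w _
    set m : ℕ → ℕ := fun i => (closedNbhd G w \ D i).card with hm
    have hterm : ∀ i : Fin L, ((N i ∩ closedNbhd G w).card : ℝ) / (N i).card
        ≤ Hr (m i) - Hr (m (i + 1)) := by
      intro i
      refine Hr_key ?_ ((hgreedy i).2 w) (hNpos i)
      -- m (i+1) + card ≤ m i
      have hdisj : Disjoint (closedNbhd G w \ D (i + 1)) (N i ∩ closedNbhd G w) := by
        refine Finset.disjoint_left.mpr fun v hv hv' => ?_
        have h1 : v ∉ D (i + 1) := (Finset.mem_sdiff.mp hv).2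
        have h2 : v ∈ closedNbhd G (l.get i) := (Finset.mem_sdiff.mp (Finset.mem_inter.mp hv').1).1
        exact h1 (hDsucc i ▸ Finset.mem_union_right _ h2)
      have hsub2 : (closedNbhd G w \ D (i + 1)) ∪ (N i ∩ closedNbhd G w) ⊆ closedNbhd G w \ D i := by
        intro v hv
        rcases Finset.mem_union.mp hv with h | h
        · have h' := Finset.mem_sdiff.mp h
          refine Finset.mem_sdiff.mpr ⟨h'.1, fun hc => h'.2 ?_⟩
          exact (hDsucc i ▸ Finset.mem_union_left _ hc)
        · have h' := Finset.mem_inter.mp h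
          exact Finset.mem_sdiff.mpr ⟨h'.2, (Finset.mem_sdiff.mp h'.1).2⟩
      calc m (i + 1) + (N i ∩ closedNbhd G w).card
          = ((closedNbhd G w \ D (i + 1)) ∪ (N i ∩ closedNbhd G w)).card :=
            (Finset.card_union_of_disjoint hdisj).symm
        _ ≤ m i := Finset.card_le_card hsub2
    calc ∑ i : Fin L, ((N i ∩ closedNbhd G w).card : ℝ) / (N i).card
        ≤ ∑ i : Fin L, (Hr (m i) - Hr (m (i + 1))) := Finset.sum_le_sum fun i _ => hterm i
      _ = ∑ i ∈ Finset.range L, (Hr (m i) - Hr (m (i + 1))) :=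
          Fin.sum_univ_eq_sum_range (fun i => Hr (m i) - Hr (m (i + 1))) L
      _ = Hr (m 0) - Hr (m L) := Finset.sum_range_sub' (fun i => Hr (m i)) L
      _ = Hr (m 0) := by
          have : m L = 0 := by
            rw [hm]; simp only [hDL]
            rw [Finset.card_eq_zero, Finset.sdiff_eq_empty_iff_subset]
            exact Finset.subset_univ _
          rw [this]; simp [Hr]
      _ ≤ Hr (G.maxDegree + 1) := by
          refine Hr_mono ?_
          have h0 : m 0 ≤ (closedNbhd G w).card := Finset.card_le_card (Finset.sdiff_subset)
          have h1 : (closedNbhd G w).card = G.degree w + 1 := by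
            rw [closedNbhd, Finset.card_insert_of_notMem (by
              simp [SimpleGraph.mem_neighborFinset]), SimpleGraph.card_neighborFinset_eq_degree]
          have h2 : G.degree w ≤ G.maxDegree := SimpleGraph.degree_le_maxDegree G w
          omega
      _ ≤ 1 + Real.log ((G.maxDegree : ℝ) + 1) := by
          have := Hr_le (G.maxDegree + 1)
          rwa [Nat.cast_add, Nat.cast_one] at this
  calc (L : ℝ) ≤ ∑ w ∈ U, ∑ i : Fin L, ((N i ∩ closedNbhd G w).card : ℝ) / (N i).card := step1
    _ ≤ ∑ w ∈ U, (1 + Real.log ((G.maxDegree : ℝ) + 1)) := Finset.sum_le_sum step2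
    _ = (dominationNumber G : ℝ) * (1 + Real.log ((G.maxDegree : ℝ) + 1)) := by
        rw [Finset.sum_const, hUcard, nsmul_eq_mul]
end

section
/- Let A* and A_t be random variables taking values in a finite arm set of size K, where A_t has the same distribution as A*. Suppose the observation upon playing arm a reveals a quantity depending only on the equivalence class of a under an equivalence relation ≡ with m classes. Then the information ratio Γ_t = (E[R(Y_{A*}) − R(Y_{A_t})])² / I(A*; (A_t, Y_{A_t})) satisfies Γ_t ≤ m/2, provided rewards take values in [0,1]. -/
open scoped Classical

noncomputable section

variable {Ω : Type*} [Fintype Ω]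

/-- Probability that the random variable `X` takes the value `a`, under the pmf `p`
on the finite sample space `Ω`. -/
def probEq {α : Type*} (p : Ω → ℝ) (X : Ω → α) (a : α) : ℝ :=
  ∑ ω, if X ω = a then p ω else 0

/-- Expectation of `f` under the pmf `p`. -/
def pmfExp (p : Ω → ℝ) (f : Ω → ℝ) : ℝ := ∑ ω, p ω * f ω

/-- Shannon entropy (in nats) of the distribution of `X` under `p`. -/
def entropyOf {α : Type*} (p : Ω → ℝ) (X : Ω → α) : ℝ :=
  -∑ ω, p ω * Real.log (probEq p X (X ω))

/-- Mutual information `I(X;Y)` under the pmf `p`. -/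
def mutualInfo {α β : Type*} (p : Ω → ℝ) (X : Ω → α) (Y : Ω → β) : ℝ :=
  ∑ ω, p ω * Real.log (probEq p (fun ω' => (X ω', Y ω')) (X ω, Y ω) /
    (probEq p X (X ω) * probEq p Y (Y ω)))

/-- The pmf `p` conditioned on the event `W = c`. -/
def condOn {γ : Type*} (p : Ω → ℝ) (W : Ω → γ) (c : γ) : Ω → ℝ :=
  fun ω => (if W ω = c then p ω else 0) / probEq p W c

/-- Conditional mutual information `I(X;Y ∣ W)` under the pmf `p`. -/
def condMutualInfo {α β γ : Type*} (p : Ω → ℝ) (X : Ω → α) (Y : Ω → β) (W : Ω → γ) : ℝ :=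
  ∑ ω, p ω * Real.log
    ((probEq p (fun ω' => (X ω', Y ω', W ω')) (X ω, Y ω, W ω) * probEq p W (W ω)) /
      (probEq p (fun ω' => (X ω', W ω')) (X ω, W ω) *
        probEq p (fun ω' => (Y ω', W ω')) (Y ω, W ω)))

/-- The history after `t` rounds of the observation process `O`. -/
def history {T : ℕ} {𝒪 : Type*} (O : Fin T → Ω → 𝒪) (t : Fin T) (ω : Ω) :
    Fin T → Option 𝒪 :=
  fun s => if (s : ℕ) < (t : ℕ) then some (O s ω) else none

namespace RVRAux

/-- `log t ≥ 2(t-1)/(t+1)` for `t ≥ 1`, and reverse for `t ≤ 1`. -/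
def Hf (t : ℝ) : ℝ := Real.log t - 2*(t-1)/(t+1)

lemma Hf_hasDeriv {t : ℝ} (ht : 0 < t) :
    HasDerivAt Hf ((t-1)^2/(t*(t+1)^2)) t := by
  have h1 : HasDerivAt Real.log t⁻¹ t := Real.hasDerivAt_log ht.ne'
  have h2 : HasDerivAt (fun t : ℝ => 2*(t-1)/(t+1))
      ((2*(t+1) - 2*(t-1)*1)/(t+1)^2) t := by
    have hu : HasDerivAt (fun t : ℝ => 2*(t-1)) 2 t := by
      simpa using ((hasDerivAt_id t).sub_const 1).const_mul 2
    have hv : HasDerivAt (fun t : ℝ => t+1) 1 t := (hasDerivAt_id t).add_const 1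
    exact hu.div hv (by nlinarith)
  have := h1.sub h2
  refine this.congr_deriv ?_
  have h3 : t + 1 ≠ 0 := by nlinarith
  field_simp
  ring

lemma Hf_mono : MonotoneOn Hf (Set.Ioi (0:ℝ)) := by
  have hint : interior (Set.Ioi (0:ℝ)) = Set.Ioi 0 := interior_Ioi
  apply monotoneOn_of_deriv_nonneg (convex_Ioi 0)
  · intro x hx
    exact (Hf_hasDeriv hx).continuousAt.continuousWithinAt
  · rw [hint]
    intro x hx
    exact (Hf_hasDeriv hx).differentiableAt.differentiableWithinAt
  · rw [hint]
    intro x hx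
    rw [(Hf_hasDeriv hx).deriv]
    have hx' : (0:ℝ) < x := hx
    positivity

lemma Hf_one : Hf 1 = 0 := by simp [Hf]

lemma Hf_nonneg {t : ℝ} (ht : 1 ≤ t) : 0 ≤ Hf t := by
  have := Hf_mono (Set.mem_Ioi.2 one_pos) (Set.mem_Ioi.2 (lt_of_lt_of_le one_pos ht)) ht
  rwa [Hf_one] at this

lemma Hf_nonpos {t : ℝ} (ht0 : 0 < t) (ht : t ≤ 1) : Hf t ≤ 0 := by
  have := Hf_mono (Set.mem_Ioi.2 ht0) (Set.mem_Ioi.2 one_pos) ht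
  rwa [Hf_one] at this

/-- the function in Kullback's pointwise bound -/
def Gf (t : ℝ) : ℝ := t * Real.log t - t + 1 - 3*(t-1)^2/(2*(t+2))

def Gf' (t : ℝ) : ℝ := Real.log t - (3/2)*((t-1)*(t+5))/(t+2)^2

lemma Gf_hasDeriv {t : ℝ} (ht : 0 < t) : HasDerivAt Gf (Gf' t) t := by
  have h1 : HasDerivAt (fun t : ℝ => t * Real.log t) (Real.log t + 1) t := by
    have := (hasDerivAt_id t).mul (Real.hasDerivAt_log ht.ne')
    refine this.congr_deriv ?_
    simp [ht.ne']
  have h2 : HasDerivAt (fun t : ℝ => 3*(t-1)^2)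
      (3*(2*(t-1))) t := by
    have := (((hasDerivAt_id t).sub_const 1).pow 2).const_mul (3:ℝ)
    simpa [mul_comm, mul_assoc, mul_left_comm] using this
  have h3 : HasDerivAt (fun t : ℝ => 2*(t+2)) 2 t := by
    simpa using ((hasDerivAt_id t).add_const 2).const_mul (2:ℝ)
  have hden : 2*(t+2) ≠ 0 := by nlinarith
  have h4 : HasDerivAt (fun t : ℝ => 3*(t-1)^2/(2*(t+2)))
      ((3*(2*(t-1))*(2*(t+2)) - 3*(t-1)^2*2)/(2*(t+2))^2) t := h2.div h3 hden
  have := ((h1.sub (hasDerivAt_id t)).add_const 1).sub h4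
  refine this.congr_deriv ?_
  have h5 : t + 2 ≠ 0 := by nlinarith
  unfold Gf'
  field_simp
  ring

lemma Gf'_eq (t : ℝ) (h : t + 1 ≠ 0) (h2 : t + 2 ≠ 0) :
    Gf' t = Hf t + (t-1)^3/(2*(t+1)*(t+2)^2) := by
  unfold Gf' Hf
  field_simp
  ring

lemma Gf'_nonneg {t : ℝ} (ht : 1 ≤ t) : 0 ≤ Gf' t := by
  rw [Gf'_eq t (by nlinarith) (by nlinarith)]
  have h1 := Hf_nonneg ht
  have h2 : 0 ≤ (t-1)^3/(2*(t+1)*(t+2)^2) :=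
    div_nonneg (by nlinarith [sq_nonneg (t-1)]) (by nlinarith [sq_nonneg (t+2)])
  linarith

lemma Gf'_nonpos {t : ℝ} (ht0 : 0 < t) (ht : t ≤ 1) : Gf' t ≤ 0 := by
  rw [Gf'_eq t (by nlinarith) (by nlinarith)]
  have h1 := Hf_nonpos ht0 ht
  have h2 : (t-1)^3/(2*(t+1)*(t+2)^2) ≤ 0 := by
    apply div_nonpos_of_nonpos_of_nonneg
    · nlinarith [sq_nonneg (t-1)]
    · positivity
  linarith

lemma Gf_one : Gf 1 = 0 := by norm_num [Gf]

lemma Gf_contAt {t : ℝ} (ht : 0 < t) : ContinuousAt Gf t :=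
  (Gf_hasDeriv ht).continuousAt

lemma Gf_nonneg {t : ℝ} (ht : 0 < t) : 0 ≤ Gf t := by
  rcases le_or_gt t 1 with h | h
  · -- antitone on Ioc 0 1
    have hA : AntitoneOn Gf (Set.Ioc (0:ℝ) 1) := by
      have hint : interior (Set.Ioc (0:ℝ) 1) = Set.Ioo 0 1 := interior_Ioc
      apply antitoneOn_of_deriv_nonpos (convex_Ioc 0 1)
      · intro x hx
        exact (Gf_contAt hx.1).continuousWithinAt
      · rw [hint]; intro x hx
        exact (Gf_hasDeriv hx.1).differentiableAt.differentiableWithinAt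
      · rw [hint]; intro x hx
        rw [(Gf_hasDeriv hx.1).deriv]
        exact Gf'_nonpos hx.1 hx.2.le
    have := hA (Set.mem_Ioc.2 ⟨ht, h⟩) (Set.mem_Ioc.2 ⟨one_pos, le_refl 1⟩) h
    rwa [Gf_one] at this
  · have hM : MonotoneOn Gf (Set.Ici (1:ℝ)) := by
      have hint : interior (Set.Ici (1:ℝ)) = Set.Ioi 1 := interior_Ici
      apply monotoneOn_of_deriv_nonneg (convex_Ici 1)
      · intro x hx
        exact (Gf_contAt (lt_of_lt_of_le one_pos hx)).continuousWithinAt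
      · rw [hint]; intro x hx
        exact (Gf_hasDeriv (lt_trans one_pos hx)).differentiableAt.differentiableWithinAt
      · rw [hint]; intro x hx
        rw [(Gf_hasDeriv (lt_trans one_pos hx)).deriv]
        exact Gf'_nonneg (le_of_lt hx)
    have := hM (Set.mem_Ici.2 (le_refl 1)) (Set.mem_Ici.2 h.le) h.le
    rwa [Gf_one] at this

/-- Core inequality: `3(t-1)²/(2(t+2)) ≤ t log t - t + 1` for `t > 0`. -/
lemma core_ineq {t : ℝ} (ht : 0 < t) :
    3*(t-1)^2/(2*(t+2)) ≤ t * Real.log t - t + 1 := by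
  have := Gf_nonneg ht
  unfold Gf at this
  linarith


lemma pt_lower {x y : ℝ} (hx : 0 ≤ x) (hy : 0 ≤ y) (h : y = 0 → x = 0) :
    x - y ≤ x * Real.log (x / y) := by
  rcases eq_or_lt_of_le hy with hy0 | hy0
  · rw [h hy0.symm, ← hy0]; simp
  rcases eq_or_lt_of_le hx with hx0 | hx0
  · rw [← hx0]; simpa using hy
  have hlog : Real.log (y / x) ≤ y / x - 1 := Real.log_le_sub_one_of_pos (by positivity)
  have hinv : Real.log (x / y) = - Real.log (y / x) := by
    rw [← Real.log_inv, inv_div]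
  rw [hinv]
  have := mul_le_mul_of_nonneg_left hlog hx
  have hxy : x * (y / x) = y := by field_simp
  nlinarith

lemma pt_quad {x y : ℝ} (hx : 0 ≤ x) (hy : 0 ≤ y) (h : y = 0 → x = 0) :
    3*(x-y)^2/(2*(x+2*y)) ≤ x * Real.log (x / y) - x + y := by
  rcases eq_or_lt_of_le hy with hy0 | hy0
  · rw [h hy0.symm, ← hy0]; simp
  rcases eq_or_lt_of_le hx with hx0 | hx0
  · rw [← hx0]
    have h1 : 3*((0:ℝ)-y)^2/(2*(0+2*y)) = 3/4*y := by
      field_simp; ring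
    rw [h1]; simp; linarith
  · set t := x / y with htdef
    have ht : 0 < t := by positivity
    have hxt : x = y * t := by rw [htdef]; field_simp
    have key := core_ineq ht
    have hkey := mul_le_mul_of_nonneg_left key hy0.le
    have e1 : y * (3*(t-1)^2/(2*(t+2))) = 3*(x-y)^2/(2*(x+2*y)) := by
      rw [hxt]; field_simp
    have e2 : y * (t * Real.log t - t + 1) = x * Real.log (x/y) - x + y := by
      rw [hxt]
      have : y * t / y = t := by field_simp
      rw [this]; ring
    rw [e1, e2] at hkey
    exact hkey

variable {β : Type*}

lemma gibbs_finset (V : Finset β) (x y : β → ℝ)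
    (hx : ∀ w ∈ V, 0 ≤ x w) (hy : ∀ w ∈ V, 0 ≤ y w)
    (habs : ∀ w ∈ V, y w = 0 → x w = 0)
    (hsum : ∑ w ∈ V, x w = ∑ w ∈ V, y w) :
    0 ≤ ∑ w ∈ V, x w * Real.log (x w / y w) := by
  have h1 : ∑ w ∈ V, (x w - y w) ≤ ∑ w ∈ V, x w * Real.log (x w / y w) :=
    Finset.sum_le_sum fun w hw => pt_lower (hx w hw) (hy w hw) (habs w hw)
  rw [Finset.sum_sub_distrib, hsum, sub_self] at h1
  exact h1

lemma pinsker_finset (V : Finset β) (x y f : β → ℝ)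
    (hx : ∀ w ∈ V, 0 ≤ x w) (hy : ∀ w ∈ V, 0 ≤ y w)
    (habs : ∀ w ∈ V, y w = 0 → x w = 0)
    (hsum : ∑ w ∈ V, x w = ∑ w ∈ V, y w)
    (hf : ∀ w ∈ V, 0 ≤ f w ∧ f w ≤ 1) :
    (∑ w ∈ V, (x w - y w) * f w)^2 ≤
      ((∑ w ∈ V, x w) / 2) * ∑ w ∈ V, x w * Real.log (x w / y w) := by
  set S := ∑ w ∈ V, x w with hS
  have hS0 : 0 ≤ S := Finset.sum_nonneg hx
  set KL := ∑ w ∈ V, x w * Real.log (x w / y w) with hKL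
  set C : β → ℝ := fun w => 3*(x w - y w)^2/(2*(x w + 2*(y w))) with hC
  have hCnn : ∀ w ∈ V, 0 ≤ C w := fun w hw => by
    apply div_nonneg (by positivity)
    have := hx w hw; have := hy w hw; linarith
  have hKLC : ∑ w ∈ V, C w ≤ KL := by
    have h1 : ∑ w ∈ V, (C w + (x w - y w)) ≤ ∑ w ∈ V, x w * Real.log (x w / y w) := by
      apply Finset.sum_le_sum
      intro w hw
      have := pt_quad (hx w hw) (hy w hw) (habs w hw)
      simp only [hC]; linarith
    rw [Finset.sum_add_distrib, Finset.sum_sub_distrib] at h1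
    rw [hKL]
    have hS' : S = ∑ w ∈ V, x w := hS
    linarith
  -- Cauchy-Schwarz: (∑ |x-y|)² ≤ (∑ 2(x+2y)/3) * (∑ C)
  have hCS : (∑ w ∈ V, |x w - y w|)^2 ≤
      (∑ w ∈ V, 2*(x w + 2*(y w))/3) * ∑ w ∈ V, C w := by
    apply Finset.sum_sq_le_sum_mul_sum_of_sq_eq_mul
    · intro w hw
      have := hx w hw; have := hy w hw; positivity
    · exact hCnn
    · intro w hw
      rw [sq_abs]
      by_cases h0 : x w + 2*(y w) = 0
      · have hx0 : x w = 0 := by have := hx w hw; have := hy w hw; linarith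
        have hy0 : y w = 0 := by have := hx w hw; have := hy w hw; linarith
        simp [hC, hx0, hy0]
      · simp only [hC]
        have h0' : x w + y w * 2 ≠ 0 := by contrapose! h0; linarith
        field_simp
  have hsum23 : ∑ w ∈ V, 2*(x w + 2*(y w))/3 = 2*S := by
    have e : ∀ w ∈ V, 2*(x w + 2*(y w))/3 = (2/3)*(x w) + (4/3)*(y w) := by
      intro w _; ring
    rw [Finset.sum_congr rfl e, Finset.sum_add_distrib, ← Finset.mul_sum, ← Finset.mul_sum,
      ← hS, ← hsum]
    ring
  rw [hsum23] at hCS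
  -- bound with f
  have hfb : |∑ w ∈ V, (x w - y w) * f w| ≤ (∑ w ∈ V, |x w - y w|) / 2 := by
    have e1 : ∑ w ∈ V, (x w - y w) * f w = ∑ w ∈ V, (x w - y w) * (f w - 1/2) := by
      have : ∑ w ∈ V, (x w - y w) * (f w - 1/2)
          = ∑ w ∈ V, ((x w - y w) * f w - (x w - y w)/2) := by
        apply Finset.sum_congr rfl; intro w _; ring
      rw [this, Finset.sum_sub_distrib, ← Finset.sum_div, Finset.sum_sub_distrib, ← hS,
        ← hsum]
      simp
    rw [e1]
    calc |∑ w ∈ V, (x w - y w) * (f w - 1/2)| ≤ ∑ w ∈ V, |(x w - y w) * (f w - 1/2)| :=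
          Finset.abs_sum_le_sum_abs _ _
      _ ≤ ∑ w ∈ V, |x w - y w| * (1/2) := by
          apply Finset.sum_le_sum
          intro w hw
          rw [abs_mul]
          apply mul_le_mul_of_nonneg_left _ (abs_nonneg _)
          rw [abs_le]
          constructor <;> [linarith [(hf w hw).1]; linarith [(hf w hw).2]]
      _ = (∑ w ∈ V, |x w - y w|) / 2 := by rw [← Finset.sum_mul]; ring
  have habs2 : (∑ w ∈ V, (x w - y w) * f w)^2 ≤ ((∑ w ∈ V, |x w - y w|) / 2)^2 := by
    rw [← sq_abs]
    apply pow_le_pow_left₀ (abs_nonneg _) hfb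
  have hfinal : ((∑ w ∈ V, |x w - y w|) / 2)^2 ≤ (S/2) * KL := by
    have h1 : (∑ w ∈ V, |x w - y w|)^2 ≤ 2*S*KL := by
      calc (∑ w ∈ V, |x w - y w|)^2 ≤ 2*S * ∑ w ∈ V, C w := hCS
        _ ≤ 2*S*KL := by
            apply mul_le_mul_of_nonneg_left hKLC (by linarith)
    have e : ((∑ w ∈ V, |x w - y w|) / 2)^2 = (∑ w ∈ V, |x w - y w|)^2/4 := by ring
    rw [e]
    linarith
  calc (∑ w ∈ V, (x w - y w) * f w)^2 ≤ ((∑ w ∈ V, |x w - y w|) / 2)^2 := habs2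
    _ ≤ (S/2) * KL := hfinal


open Finset

variable {Ω : Type*} [Fintype Ω]

lemma ite_nonneg (c : Prop) [Decidable c] (x : ℝ) (hx : 0 ≤ x) :
    0 ≤ if c then x else 0 := by split <;> simp [hx]

lemma ite_le_ite (c d : Prop) [Decidable c] [Decidable d] (h : c → d) (x : ℝ)
    (hx : 0 ≤ x) : (if c then x else 0) ≤ if d then x else 0 := by
  split
  · next hc => simp [h hc, le_refl]
  · exact ite_nonneg d x hx

lemma sum_ite_eq_mem {β : Type*} (V : Finset β) (b : β) (f : β → ℝ) (c : β → Prop)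
    [D : ∀ v, Decidable (c v)] (h : ∀ v, c v ↔ v = b) (hb : b ∈ V) :
    (∑ v ∈ V, if c v then f v else 0) = f b := by
  rw [← Finset.sum_filter]
  have hfil : V.filter c = {b} := by
    ext v
    simp [Finset.mem_filter, h v]
    intro hv; rw [hv]; exact hb
  rw [hfil, Finset.sum_singleton]

lemma sum_partition {β : Type*} (V : Finset β) (φ : Ω → β) (hφ : ∀ ω, φ ω ∈ V)
    (F : Ω → ℝ) [D : ∀ ω v, Decidable (φ ω = v)] :
    ∑ ω, F ω = ∑ v ∈ V, ∑ ω, if φ ω = v then F ω else 0 := by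
  have key : ∀ ω, F ω = ∑ v ∈ V, if φ ω = v then F ω else 0 := by
    intro ω
    rw [sum_ite_eq_mem V (φ ω) (fun _ => F ω) (fun v => φ ω = v)
      (fun v => eq_comm) (hφ ω)]
  rw [Finset.sum_congr rfl (fun ω _ => key ω), Finset.sum_comm]

lemma sum_ite_congr {β : Type*} (φ : Ω → β) (v : β) (F G : Ω → ℝ)
    [D : ∀ ω, Decidable (φ ω = v)]
    (h : ∀ ω, φ ω = v → F ω = G ω) :
    ∑ ω, (if φ ω = v then F ω else 0) = ∑ ω, (if φ ω = v then G ω else 0) := by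
  apply Finset.sum_congr rfl
  intro ω _
  by_cases hc : φ ω = v
  · simp [hc, h ω hc]
  · simp [hc]

lemma sum_fiber1 {β : Type*} (V : Finset β) (φ : Ω → β) (hφ : ∀ ω, φ ω ∈ V)
    (F : Ω → ℝ) (G : β → ℝ) [D : ∀ ω v, Decidable (φ ω = v)] :
    ∑ ω, F ω * G (φ ω) = ∑ v ∈ V, (∑ ω, if φ ω = v then F ω else 0) * G v := by
  rw [sum_partition V φ hφ (fun ω => F ω * G (φ ω))]
  apply Finset.sum_congr rfl
  intro v hv
  rw [Finset.sum_mul]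
  apply Finset.sum_congr rfl
  intro ω _
  by_cases hc : φ ω = v <;> simp [hc]

lemma sum_fiber2 {α β : Type*} (U : Finset α) (V : Finset β) (φ : Ω → α) (ψ : Ω → β)
    (hφ : ∀ ω, φ ω ∈ U) (hψ : ∀ ω, ψ ω ∈ V) (F : Ω → ℝ) (G : α → β → ℝ)
    [D : ∀ ω u v, Decidable (φ ω = u ∧ ψ ω = v)] :
    ∑ ω, F ω * G (φ ω) (ψ ω) =
      ∑ u ∈ U, ∑ v ∈ V, (∑ ω, if φ ω = u ∧ ψ ω = v then F ω else 0) * G u v := by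
  have key : ∀ ω, F ω * G (φ ω) (ψ ω)
      = ∑ u ∈ U, ∑ v ∈ V, if φ ω = u ∧ ψ ω = v then F ω * G u v else 0 := by
    intro ω
    have inner : ∀ u ∈ U, (∑ v ∈ V, if φ ω = u ∧ ψ ω = v then F ω * G u v else 0)
        = if φ ω = u then F ω * G u (ψ ω) else 0 := by
      intro u _
      by_cases h : φ ω = u
      · rw [sum_ite_eq_mem V (ψ ω) (fun v => F ω * G u v)
          (fun v => φ ω = u ∧ ψ ω = v) (fun v => by simp [h, eq_comm]) (hψ ω)]
        simp [h]
      · have : ∀ v ∈ V, (if φ ω = u ∧ ψ ω = v then F ω * G u v else 0) = 0 := by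
          intro v _
          rw [if_neg]; rintro ⟨h1, -⟩; exact h h1
        rw [Finset.sum_congr rfl this]
        simp [h]
    rw [Finset.sum_congr rfl inner,
      sum_ite_eq_mem U (φ ω) (fun u => F ω * G u (ψ ω)) (fun u => φ ω = u)
        (fun u => eq_comm) (hφ ω)]
  rw [Finset.sum_congr rfl (fun ω _ => key ω), Finset.sum_comm]
  apply Finset.sum_congr rfl
  intro u _
  rw [Finset.sum_comm]
  apply Finset.sum_congr rfl
  intro v _
  rw [Finset.sum_mul]
  apply Finset.sum_congr rfl
  intro ω _
  by_cases hc : φ ω = u ∧ ψ ω = v <;> simp [hc]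

lemma sum_comp_fiber {α κ : Type*} [Fintype α] [Fintype κ] (g : α → κ) (c : α → ℝ)
    (h : κ → ℝ) [D : ∀ a k, Decidable (g a = k)] :
    ∑ a, c a * h (g a) = ∑ k, (∑ a, if g a = k then c a else 0) * h k := by
  rw [sum_partition (Finset.univ : Finset κ) g (fun a => Finset.mem_univ _)
    (fun a => c a * h (g a))]
  apply Finset.sum_congr rfl
  intro k _
  rw [Finset.sum_mul]
  apply Finset.sum_congr rfl
  intro a _
  by_cases hc : g a = k <;> simp [hc]


lemma probEq_eq_sum {Ω α : Type*} [Fintype Ω] (p : Ω → ℝ) (X : Ω → α) (v : α) (c : Ω → Prop)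
    [∀ ω, Decidable (c ω)] (h : ∀ ω, X ω = v ↔ c ω) :
    probEq p X v = ∑ ω, if c ω then p ω else 0 :=
  Finset.sum_congr rfl fun ω _ => if_congr (h ω) rfl rfl

end RVRAux

open RVRAux Finset

set_option maxHeartbeats 2000000 in
/-- Russo–Van Roy information ratio bound with equivalence-class feedback: if playing arm
`a` reveals `Y_a = (a, Z_{[a]})` where `[a]` is the class of `a` under an equivalence
relation with `m` classes, `A_t` is identically distributed with `A*` and independent of
`(A*, Z)`, and rewards lie in `[0,1]`, then `Γ_t ≤ m/2`. -/
theorem information_ratio_le_half_card_classes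
    {Ω Arm ZVal : Type*} [Fintype Ω] [Fintype Arm]
    (m : ℕ) (cls : Arm → Fin m) (hcls : Function.Surjective cls)
    (p : Ω → ℝ) (hp : ∀ ω, 0 ≤ p ω) (hpsum : ∑ ω, p ω = 1)
    (Astar At : Ω → Arm) (Z : Ω → Fin m → ZVal)
    (R : Arm × ZVal → ℝ) (hR : ∀ y, R y ∈ Set.Icc (0 : ℝ) 1)
    (hmatch : ∀ a : Arm, probEq p At a = probEq p Astar a)
    (hindep : ∀ (a b : Arm) (z : Fin m → ZVal),
      probEq p (fun ω => (At ω, Astar ω, Z ω)) (a, b, z) =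
        probEq p At a * probEq p (fun ω => (Astar ω, Z ω)) (b, z)) :
    (pmfExp p (fun ω =>
        R (Astar ω, Z ω (cls (Astar ω))) - R (At ω, Z ω (cls (At ω))))) ^ 2 /
        mutualInfo p Astar (fun ω => (At ω, (At ω, Z ω (cls (At ω))))) ≤ m / 2 := by
  -- basic distributions
  set π : Arm → ℝ := fun a => probEq p Astar a with hπdef
  have hπnn : ∀ a, 0 ≤ π a := fun a =>
    Finset.sum_nonneg fun ω _ => ite_nonneg _ _ (hp ω)
  have hπ_ge : ∀ ω, p ω ≤ π (At ω) := by
    intro ω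
    have h1 : p ω ≤ probEq p At (At ω) := by
      have h2 := Finset.single_le_sum
        (f := fun ω' => if At ω' = At ω then p ω' else 0)
        (fun ω' _ => ite_nonneg _ _ (hp ω')) (Finset.mem_univ ω)
      simpa [probEq] using h2
    rw [hmatch (At ω)] at h1
    exact h1
  set Vk : Fin m → Finset ZVal := fun k => Finset.univ.image (fun ω => Z ω k) with hVkdef
  have hmemV : ∀ (ω : Ω) (k : Fin m), Z ω k ∈ Vk k := fun ω k =>
    Finset.mem_image.2 ⟨ω, Finset.mem_univ ω, rfl⟩
  set rho : Arm → Fin m → ZVal → ℝ :=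
    fun b k w => ∑ ω, if Astar ω = b ∧ Z ω k = w then p ω else 0 with hrhodef
  set sig : Fin m → ZVal → ℝ :=
    fun k w => ∑ ω, if Z ω k = w then p ω else 0 with hsigdef
  have hrhonn : ∀ b k w, 0 ≤ rho b k w := fun b k w =>
    Finset.sum_nonneg fun ω _ => ite_nonneg _ _ (hp ω)
  have hsignn : ∀ k w, 0 ≤ sig k w := fun k w =>
    Finset.sum_nonneg fun ω _ => ite_nonneg _ _ (hp ω)
  have hrho_le_pi : ∀ b k w, rho b k w ≤ π b :=
    fun b k w => Finset.sum_le_sum fun ω _ =>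
      ite_le_ite _ _ (fun h => h.1) _ (hp ω)
  have hrho_le_sig : ∀ b k w, rho b k w ≤ sig k w :=
    fun b k w => Finset.sum_le_sum fun ω _ =>
      ite_le_ite _ _ (fun h => h.2) _ (hp ω)
  have hrhosum : ∀ b k, ∑ w ∈ Vk k, rho b k w = π b := by
    intro b k
    have h1 := sum_partition (Vk k) (fun ω => Z ω k) (fun ω => hmemV ω k)
      (fun ω => if Astar ω = b then p ω else 0)
    calc ∑ w ∈ Vk k, rho b k w
        = ∑ w ∈ Vk k, ∑ ω, if Z ω k = w then (if Astar ω = b then p ω else 0) else 0 := by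
          apply Finset.sum_congr rfl
          intro w _
          apply Finset.sum_congr rfl
          intro ω _
          by_cases h1' : Astar ω = b <;> by_cases h2' : Z ω k = w <;> simp [h1', h2']
      _ = ∑ ω, if Astar ω = b then p ω else 0 := h1.symm
      _ = π b := rfl
  have hsigsum : ∀ k, ∑ w ∈ Vk k, sig k w = 1 := by
    intro k
    have h1 := sum_partition (Vk k) (fun ω => Z ω k) (fun ω => hmemV ω k) p
    calc ∑ w ∈ Vk k, sig k w = ∑ ω, p ω := h1.symm
      _ = 1 := hpsum
  -- independence workhorse
  have hindepG : ∀ (a : Arm) (G : Arm → (Fin m → ZVal) → ℝ),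
      ∑ ω, (if At ω = a then p ω else 0) * G (Astar ω) (Z ω)
        = π a * ∑ ω, p ω * G (Astar ω) (Z ω) := by
    intro a G
    have hmemZ : ∀ ω, Z ω ∈ Finset.univ.image Z :=
      fun ω => Finset.mem_image.2 ⟨ω, Finset.mem_univ ω, rfl⟩
    have hind' : ∀ (b : Arm) (z : Fin m → ZVal),
        (∑ ω, if Astar ω = b ∧ Z ω = z then (if At ω = a then p ω else 0) else 0)
          = π a * ∑ ω, if Astar ω = b ∧ Z ω = z then p ω else 0 := by
      intro b z
      have e1 : (∑ ω, if Astar ω = b ∧ Z ω = z then (if At ω = a then p ω else 0) else 0)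
          = ∑ ω, if At ω = a ∧ Astar ω = b ∧ Z ω = z then p ω else 0 := by
        apply Finset.sum_congr rfl
        intro ω _
        by_cases h1' : At ω = a <;> by_cases h2' : Astar ω = b <;> by_cases h3' : Z ω = z <;>
          simp [h1', h2', h3']
      have e2 : probEq p (fun ω => (Astar ω, Z ω)) (b, z)
          = ∑ ω, if Astar ω = b ∧ Z ω = z then p ω else 0 :=
        probEq_eq_sum p _ _ _ (fun ω => by simp only [Prod.mk.injEq])
      have e3 : probEq p (fun ω => (At ω, Astar ω, Z ω)) (a, b, z)
          = ∑ ω, if At ω = a ∧ Astar ω = b ∧ Z ω = z then p ω else 0 :=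
        probEq_eq_sum p _ _ _ (fun ω => by simp only [Prod.mk.injEq])
      rw [e1, ← e3, hindep a b z, hmatch a, e2]
    calc ∑ ω, (if At ω = a then p ω else 0) * G (Astar ω) (Z ω)
        = ∑ b, ∑ z ∈ Finset.univ.image Z,
            (∑ ω, if Astar ω = b ∧ Z ω = z then (if At ω = a then p ω else 0) else 0)
              * G b z :=
          sum_fiber2 Finset.univ (Finset.univ.image Z) Astar Z
            (fun ω => Finset.mem_univ _) hmemZ (fun ω => if At ω = a then p ω else 0) G
      _ = π a * ∑ b, ∑ z ∈ Finset.univ.image Z,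
            (∑ ω, if Astar ω = b ∧ Z ω = z then p ω else 0) * G b z := by
          rw [Finset.mul_sum]
          apply Finset.sum_congr rfl; intro b _
          rw [Finset.mul_sum]
          apply Finset.sum_congr rfl; intro z _
          rw [hind' b z]; ring
      _ = π a * ∑ ω, p ω * G (Astar ω) (Z ω) := by
          congr 1
          exact (sum_fiber2 Finset.univ (Finset.univ.image Z) Astar Z
            (fun ω => Finset.mem_univ _) hmemZ p G).symm
  -- key KL-type quantities
  set KL : Arm → Fin m → ℝ :=
    fun b k => ∑ w ∈ Vk k, rho b k w * Real.log (rho b k w / (π b * sig k w)) with hKLdef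
  set W : Fin m → ℝ := fun k => ∑ b, KL b k with hWdef
  set q : Fin m → ℝ := fun k => ∑ a, if cls a = k then π a else 0 with hqdef
  set d : Arm → ℝ :=
    fun a => ∑ w ∈ Vk (cls a), (rho a (cls a) w - π a * sig (cls a) w) * R (a, w) with hddef
  have habs : ∀ b k w, π b * sig k w = 0 → rho b k w = 0 := by
    intro b k w h0
    rcases mul_eq_zero.1 h0 with h | h
    · exact le_antisymm (h ▸ hrho_le_pi b k w) (hrhonn b k w)
    · exact le_antisymm (h ▸ hrho_le_sig b k w) (hrhonn b k w)
  have hmass : ∀ b k, ∑ w ∈ Vk k, π b * sig k w = π b := by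
    intro b k
    rw [← Finset.mul_sum, hsigsum k, mul_one]
  have hKLnn : ∀ b k, 0 ≤ KL b k := by
    intro b k
    apply gibbs_finset (Vk k) (rho b k) (fun w => π b * sig k w)
      (fun w _ => hrhonn b k w)
      (fun w _ => mul_nonneg (hπnn b) (hsignn k w))
      (fun w _ => habs b k w)
    rw [hrhosum b k, hmass b k]
  have hWnn : ∀ k, 0 ≤ W k := fun k => Finset.sum_nonneg fun b _ => hKLnn b k
  have hqnn : ∀ k, 0 ≤ q k := fun k =>
    Finset.sum_nonneg fun a _ => ite_nonneg _ _ (hπnn a)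
  have hd2 : ∀ a, d a ^ 2 ≤ (π a / 2) * KL a (cls a) := by
    intro a
    have h1 := pinsker_finset (Vk (cls a)) (rho a (cls a))
      (fun w => π a * sig (cls a) w) (fun w => R (a, w))
      (fun w _ => hrhonn a (cls a) w)
      (fun w _ => mul_nonneg (hπnn a) (hsignn (cls a) w))
      (fun w _ => habs a (cls a) w)
      (by rw [hrhosum a (cls a), hmass a (cls a)])
      (fun w _ => ⟨(hR (a, w)).1, (hR (a, w)).2⟩)
    rw [hrhosum a (cls a)] at h1
    exact h1
  -- numerator
  have hT1 : ∑ ω, p ω * R (Astar ω, Z ω (cls (Astar ω)))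
      = ∑ b, ∑ w ∈ Vk (cls b), rho b (cls b) w * R (b, w) := by
    rw [sum_partition (Finset.univ : Finset Arm) Astar (fun ω => Finset.mem_univ _)
      (fun ω => p ω * R (Astar ω, Z ω (cls (Astar ω))))]
    apply Finset.sum_congr rfl
    intro b _
    rw [sum_ite_congr Astar b (fun ω => p ω * R (Astar ω, Z ω (cls (Astar ω))))
      (fun ω => p ω * R (b, Z ω (cls b))) (fun ω h => by simp only [h])]
    have e : ∀ ω, (if Astar ω = b then p ω * R (b, Z ω (cls b)) else 0)
        = (if Astar ω = b then p ω else 0) * R (b, Z ω (cls b)) := by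
      intro ω; by_cases h : Astar ω = b <;> simp [h]
    calc ∑ ω, (if Astar ω = b then p ω * R (b, Z ω (cls b)) else 0)
        = ∑ ω, (if Astar ω = b then p ω else 0) * R (b, Z ω (cls b)) :=
          Finset.sum_congr rfl (fun ω _ => e ω)
      _ = ∑ w ∈ Vk (cls b),
            (∑ ω, if Z ω (cls b) = w then (if Astar ω = b then p ω else 0) else 0)
              * R (b, w) :=
          sum_fiber1 (Vk (cls b)) (fun ω => Z ω (cls b)) (fun ω => hmemV ω (cls b))
            (fun ω => if Astar ω = b then p ω else 0) (fun w => R (b, w))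
      _ = ∑ w ∈ Vk (cls b), rho b (cls b) w * R (b, w) := by
          apply Finset.sum_congr rfl
          intro w _
          congr 1
          apply Finset.sum_congr rfl
          intro ω _
          by_cases h1' : Astar ω = b <;> by_cases h2' : Z ω (cls b) = w <;>
            simp [h1', h2']
  have hT2 : ∑ ω, p ω * R (At ω, Z ω (cls (At ω)))
      = ∑ a, π a * ∑ w ∈ Vk (cls a), sig (cls a) w * R (a, w) := by
    rw [sum_partition (Finset.univ : Finset Arm) At (fun ω => Finset.mem_univ _)
      (fun ω => p ω * R (At ω, Z ω (cls (At ω))))]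
    apply Finset.sum_congr rfl
    intro a _
    rw [sum_ite_congr At a (fun ω => p ω * R (At ω, Z ω (cls (At ω))))
      (fun ω => p ω * R (a, Z ω (cls a))) (fun ω h => by simp only [h])]
    have e : ∀ ω, (if At ω = a then p ω * R (a, Z ω (cls a)) else 0)
        = (if At ω = a then p ω else 0) * R (a, Z ω (cls a)) := by
      intro ω; by_cases h : At ω = a <;> simp [h]
    calc ∑ ω, (if At ω = a then p ω * R (a, Z ω (cls a)) else 0)
        = ∑ ω, (if At ω = a then p ω else 0) * R (a, Z ω (cls a)) :=
          Finset.sum_congr rfl (fun ω _ => e ω)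
      _ = π a * ∑ ω, p ω * R (a, Z ω (cls a)) :=
          hindepG a (fun _ z => R (a, z (cls a)))
      _ = π a * ∑ w ∈ Vk (cls a), sig (cls a) w * R (a, w) := by
          congr 1
          exact sum_fiber1 (Vk (cls a)) (fun ω => Z ω (cls a)) (fun ω => hmemV ω (cls a))
            p (fun w => R (a, w))
  have hDelta : pmfExp p (fun ω =>
      R (Astar ω, Z ω (cls (Astar ω))) - R (At ω, Z ω (cls (At ω)))) = ∑ a, d a := by
    calc pmfExp p (fun ω =>
        R (Astar ω, Z ω (cls (Astar ω))) - R (At ω, Z ω (cls (At ω))))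
        = ∑ ω, (p ω * R (Astar ω, Z ω (cls (Astar ω)))
            - p ω * R (At ω, Z ω (cls (At ω)))) := by
          apply Finset.sum_congr rfl
          intro ω _
          ring
      _ = (∑ ω, p ω * R (Astar ω, Z ω (cls (Astar ω))))
            - ∑ ω, p ω * R (At ω, Z ω (cls (At ω))) := Finset.sum_sub_distrib _ _
      _ = (∑ b, ∑ w ∈ Vk (cls b), rho b (cls b) w * R (b, w))
            - ∑ a, π a * ∑ w ∈ Vk (cls a), sig (cls a) w * R (a, w) := by
          rw [hT1, hT2]
      _ = ∑ a, d a := by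
          rw [← Finset.sum_sub_distrib]
          apply Finset.sum_congr rfl
          intro a _
          rw [Finset.mul_sum, ← Finset.sum_sub_distrib]
          apply Finset.sum_congr rfl
          intro w _
          ring
  -- the mutual information
  have hJ : ∀ (a b : Arm) (w : ZVal),
      (∑ ω, if At ω = a ∧ Astar ω = b ∧ Z ω (cls a) = w then p ω else 0)
        = π a * rho b (cls a) w := by
    intro a b w
    have h1 := hindepG a (fun b' z => if b' = b ∧ z (cls a) = w then (1:ℝ) else 0)
    calc (∑ ω, if At ω = a ∧ Astar ω = b ∧ Z ω (cls a) = w then p ω else 0)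
        = ∑ ω, (if At ω = a then p ω else 0)
            * (if Astar ω = b ∧ Z ω (cls a) = w then (1:ℝ) else 0) := by
          apply Finset.sum_congr rfl
          intro ω _
          by_cases h1' : At ω = a <;> by_cases h2' : Astar ω = b ∧ Z ω (cls a) = w <;>
            simp [h1', h2']
      _ = π a * ∑ ω, p ω * (if Astar ω = b ∧ Z ω (cls a) = w then (1:ℝ) else 0) := h1
      _ = π a * rho b (cls a) w := by
          congr 1
          apply Finset.sum_congr rfl
          intro ω _
          by_cases h2' : Astar ω = b ∧ Z ω (cls a) = w <;> simp [h2']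
  have hM : ∀ (a : Arm) (w : ZVal),
      (∑ ω, if At ω = a ∧ Z ω (cls a) = w then p ω else 0)
        = π a * sig (cls a) w := by
    intro a w
    have h1 := hindepG a (fun _ z => if z (cls a) = w then (1:ℝ) else 0)
    calc (∑ ω, if At ω = a ∧ Z ω (cls a) = w then p ω else 0)
        = ∑ ω, (if At ω = a then p ω else 0)
            * (if Z ω (cls a) = w then (1:ℝ) else 0) := by
          apply Finset.sum_congr rfl
          intro ω _
          by_cases h1' : At ω = a <;> by_cases h2' : Z ω (cls a) = w <;>
            simp [h1', h2']
      _ = π a * ∑ ω, p ω * (if Z ω (cls a) = w then (1:ℝ) else 0) := h1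
      _ = π a * sig (cls a) w := by
          congr 1
          apply Finset.sum_congr rfl
          intro ω _
          by_cases h2' : Z ω (cls a) = w <;> simp [h2']
  have hPj : ∀ ω : Ω, probEq p
        (fun ω' => (Astar ω', At ω', At ω', Z ω' (cls (At ω'))))
        (Astar ω, At ω, At ω, Z ω (cls (At ω)))
      = π (At ω) * rho (Astar ω) (cls (At ω)) (Z ω (cls (At ω))) := by
    intro ω
    rw [probEq_eq_sum p _ _
      (fun ω' => At ω' = At ω ∧ Astar ω' = Astar ω
        ∧ Z ω' (cls (At ω)) = Z ω (cls (At ω)))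
      (fun ω' => by
        simp only [Prod.mk.injEq]
        constructor
        · rintro ⟨h1, h2, -, h4⟩
          rw [h2] at h4
          exact ⟨h2, h1, h4⟩
        · rintro ⟨h2, h1, h4⟩
          refine ⟨h1, h2, h2, ?_⟩
          rw [h2]
          exact h4)]
    exact hJ (At ω) (Astar ω) (Z ω (cls (At ω)))
  have hPy : ∀ ω : Ω, probEq p
        (fun ω' => (At ω', At ω', Z ω' (cls (At ω'))))
        (At ω, At ω, Z ω (cls (At ω)))
      = π (At ω) * sig (cls (At ω)) (Z ω (cls (At ω))) := by
    intro ω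
    rw [probEq_eq_sum p _ _
      (fun ω' => At ω' = At ω ∧ Z ω' (cls (At ω)) = Z ω (cls (At ω)))
      (fun ω' => by
        simp only [Prod.mk.injEq]
        constructor
        · rintro ⟨h2, -, h4⟩
          rw [h2] at h4
          exact ⟨h2, h4⟩
        · rintro ⟨h2, h4⟩
          refine ⟨h2, h2, ?_⟩
          rw [h2]
          exact h4)]
    exact hM (At ω) (Z ω (cls (At ω)))
  have hMI : mutualInfo p Astar (fun ω => (At ω, (At ω, Z ω (cls (At ω)))))
      = ∑ k, q k * W k := by
    calc mutualInfo p Astar (fun ω => (At ω, (At ω, Z ω (cls (At ω)))))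
        = ∑ ω, p ω * Real.log
            ((π (At ω) * rho (Astar ω) (cls (At ω)) (Z ω (cls (At ω)))) /
              (π (Astar ω) * (π (At ω) * sig (cls (At ω)) (Z ω (cls (At ω)))))) := by
          apply Finset.sum_congr rfl
          intro ω _
          rw [hPj ω, hPy ω]
      _ = ∑ ω, p ω * Real.log
            (rho (Astar ω) (cls (At ω)) (Z ω (cls (At ω))) /
              (π (Astar ω) * sig (cls (At ω)) (Z ω (cls (At ω))))) := by
          apply Finset.sum_congr rfl
          intro ω _
          by_cases hp0 : p ω = 0
          · rw [hp0]; ring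
          · have hπa : 0 < π (At ω) :=
              lt_of_lt_of_le (lt_of_le_of_ne (hp ω) (Ne.symm hp0)) (hπ_ge ω)
            congr 2
            rw [mul_left_comm (π (Astar ω)) (π (At ω))
              (sig (cls (At ω)) (Z ω (cls (At ω))))]
            exact mul_div_mul_left _ _ (ne_of_gt hπa)
      _ = ∑ a, π a * ∑ ω, p ω * Real.log
            (rho (Astar ω) (cls a) (Z ω (cls a)) /
              (π (Astar ω) * sig (cls a) (Z ω (cls a)))) := by
          rw [sum_partition (Finset.univ : Finset Arm) At (fun ω => Finset.mem_univ _)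
            (fun ω => p ω * Real.log
              (rho (Astar ω) (cls (At ω)) (Z ω (cls (At ω))) /
                (π (Astar ω) * sig (cls (At ω)) (Z ω (cls (At ω))))))]
          apply Finset.sum_congr rfl
          intro a _
          rw [sum_ite_congr At a _
            (fun ω => p ω * Real.log
              (rho (Astar ω) (cls a) (Z ω (cls a)) /
                (π (Astar ω) * sig (cls a) (Z ω (cls a)))))
            (fun ω h => by simp only [h])]
          have e : ∀ ω, (if At ω = a then p ω * Real.log
              (rho (Astar ω) (cls a) (Z ω (cls a)) /
                (π (Astar ω) * sig (cls a) (Z ω (cls a)))) else 0)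
              = (if At ω = a then p ω else 0) * Real.log
                  (rho (Astar ω) (cls a) (Z ω (cls a)) /
                    (π (Astar ω) * sig (cls a) (Z ω (cls a)))) := by
            intro ω; by_cases h : At ω = a <;> simp [h]
          rw [Finset.sum_congr rfl (fun ω _ => e ω)]
          exact hindepG a (fun b z => Real.log
            (rho b (cls a) (z (cls a)) / (π b * sig (cls a) (z (cls a)))))
      _ = ∑ a, π a * W (cls a) := by
          apply Finset.sum_congr rfl
          intro a _
          congr 1
          calc ∑ ω, p ω * Real.log
                  (rho (Astar ω) (cls a) (Z ω (cls a)) /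
                    (π (Astar ω) * sig (cls a) (Z ω (cls a))))
              = ∑ b, ∑ w ∈ Vk (cls a),
                  (∑ ω, if Astar ω = b ∧ Z ω (cls a) = w then p ω else 0)
                    * Real.log (rho b (cls a) w / (π b * sig (cls a) w)) :=
                sum_fiber2 Finset.univ (Vk (cls a)) Astar (fun ω => Z ω (cls a))
                  (fun ω => Finset.mem_univ _) (fun ω => hmemV ω (cls a)) p
                  (fun b w => Real.log (rho b (cls a) w / (π b * sig (cls a) w)))
            _ = W (cls a) := rfl
      _ = ∑ k, q k * W k := sum_comp_fiber cls π W
  -- Cauchy-Schwarz assembly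
  have hd_abs : ∀ a, |d a| ≤ Real.sqrt (π a) * Real.sqrt (KL a (cls a) / 2) := by
    intro a
    rw [← Real.sqrt_sq_eq_abs]
    calc Real.sqrt (d a ^ 2) ≤ Real.sqrt (π a * (KL a (cls a) / 2)) := by
          apply Real.sqrt_le_sqrt
          calc d a ^ 2 ≤ (π a / 2) * KL a (cls a) := hd2 a
            _ = π a * (KL a (cls a) / 2) := by ring
      _ = Real.sqrt (π a) * Real.sqrt (KL a (cls a) / 2) := Real.sqrt_mul (hπnn a) _
  have hDk : ∀ k, (∑ a, if cls a = k then |d a| else 0)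
      ≤ Real.sqrt (q k) * Real.sqrt (W k / 2) := by
    intro k
    have step1 : (∑ a, if cls a = k then |d a| else 0)
        ≤ ∑ a, (if cls a = k then Real.sqrt (π a) else 0) * Real.sqrt (KL a k / 2) := by
      apply Finset.sum_le_sum
      intro a _
      by_cases h : cls a = k
      · simp only [h, if_pos]
        have := hd_abs a
        rwa [h] at this
      · simp [h]
    have step2 : ∑ a, (if cls a = k then Real.sqrt (π a) else 0) * Real.sqrt (KL a k / 2)
        ≤ Real.sqrt (∑ a, (if cls a = k then Real.sqrt (π a) else 0) ^ 2)
            * Real.sqrt (∑ a, Real.sqrt (KL a k / 2) ^ 2) :=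
      Real.sum_mul_le_sqrt_mul_sqrt _ _ _
    have e1 : ∑ a, (if cls a = k then Real.sqrt (π a) else 0) ^ 2 = q k := by
      apply Finset.sum_congr rfl
      intro a _
      by_cases h : cls a = k
      · simp [h, Real.sq_sqrt (hπnn a)]
      · simp [h]
    have e2 : ∑ a, Real.sqrt (KL a k / 2) ^ 2 = W k / 2 := by
      show ∑ a, Real.sqrt (KL a k / 2) ^ 2 = (∑ b, KL b k) / 2
      rw [Finset.sum_div]
      apply Finset.sum_congr rfl
      intro a _
      rw [Real.sq_sqrt (div_nonneg (hKLnn a k) (by norm_num))]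
    calc (∑ a, if cls a = k then |d a| else 0)
        ≤ ∑ a, (if cls a = k then Real.sqrt (π a) else 0) * Real.sqrt (KL a k / 2) := step1
      _ ≤ Real.sqrt (∑ a, (if cls a = k then Real.sqrt (π a) else 0) ^ 2)
            * Real.sqrt (∑ a, Real.sqrt (KL a k / 2) ^ 2) := step2
      _ = Real.sqrt (q k) * Real.sqrt (W k / 2) := by rw [e1, e2]
  have hDabs : |∑ a, d a| ≤ ∑ k, Real.sqrt (q k) * Real.sqrt (W k / 2) := by
    calc |∑ a, d a| = |∑ k, ∑ a, if cls a = k then d a else 0| := by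
          rw [← sum_partition (Finset.univ : Finset (Fin m)) cls
            (fun a => Finset.mem_univ _) d]
      _ ≤ ∑ k, |∑ a, if cls a = k then d a else 0| := Finset.abs_sum_le_sum_abs _ _
      _ ≤ ∑ k, ∑ a, if cls a = k then |d a| else 0 := by
          apply Finset.sum_le_sum
          intro k _
          calc |∑ a, if cls a = k then d a else 0|
              ≤ ∑ a, |if cls a = k then d a else 0| := Finset.abs_sum_le_sum_abs _ _
            _ = ∑ a, if cls a = k then |d a| else 0 := by
                apply Finset.sum_congr rfl
                intro a _
                by_cases h : cls a = k <;> simp [h]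
      _ ≤ ∑ k, Real.sqrt (q k) * Real.sqrt (W k / 2) :=
          Finset.sum_le_sum fun k _ => hDk k
  have hnum : (∑ a, d a) ^ 2 ≤ (m : ℝ) / 2 * ∑ k, q k * W k := by
    have h1 : (∑ a, d a) ^ 2 ≤ (∑ k, Real.sqrt (q k) * Real.sqrt (W k / 2)) ^ 2 := by
      rw [← sq_abs]
      apply pow_le_pow_left₀ (abs_nonneg _) hDabs
    have h2 : (∑ k, Real.sqrt (q k) * Real.sqrt (W k / 2)) ^ 2
        ≤ (Finset.univ.card : ℝ) * ∑ k, (Real.sqrt (q k) * Real.sqrt (W k / 2)) ^ 2 :=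
      sq_sum_le_card_mul_sum_sq
    have e3 : ∑ k, (Real.sqrt (q k) * Real.sqrt (W k / 2)) ^ 2
        = (∑ k, q k * W k) / 2 := by
      rw [Finset.sum_div]
      apply Finset.sum_congr rfl
      intro k _
      rw [mul_pow, Real.sq_sqrt (hqnn k), Real.sq_sqrt (div_nonneg (hWnn k) (by norm_num))]
      ring
    have e4 : ((Finset.univ : Finset (Fin m)).card : ℝ) = (m : ℝ) := by
      simp
    calc (∑ a, d a) ^ 2 ≤ (∑ k, Real.sqrt (q k) * Real.sqrt (W k / 2)) ^ 2 := h1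
      _ ≤ (Finset.univ.card : ℝ) * ∑ k, (Real.sqrt (q k) * Real.sqrt (W k / 2)) ^ 2 := h2
      _ = (m : ℝ) * ((∑ k, q k * W k) / 2) := by rw [e3, e4]
      _ = (m : ℝ) / 2 * ∑ k, q k * W k := by ring
  -- conclusion
  rw [hDelta, hMI]
  have hInn : 0 ≤ ∑ k, q k * W k :=
    Finset.sum_nonneg fun k _ => mul_nonneg (hqnn k) (hWnn k)
  rcases hInn.eq_or_lt with h0 | hpos
  · rw [← h0, div_zero]
    positivity
  · rw [div_le_iff₀ hpos]
    exact hnum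
end
end

section
/- In the graph feedback setting where playing arm a reveals the rewards of all arms in a clique containing a from a fixed clique cover 𝒞 of the feedback graph G, the information ratio of Thompson sampling satisfies Γ_t ≤ |𝒞|/2. -/
open scoped Classical

noncomputable section

variable {Ω : Type*} [Fintype Ω]

/-- A map `f : V → Fin m` is a clique covering of `G` if every fiber induces a clique. -/
def IsCliqueCovering {V : Type*} (G : SimpleGraph V) {m : ℕ} (f : V → Fin m) : Prop :=
  ∀ c : Fin m, G.IsClique (f ⁻¹' {c})

namespace IRProof

/-- `(t+2)^3 ≥ 27 t` for `t > 0`. -/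
lemma cube_ineq (t : ℝ) (ht : 0 < t) : 27 * t ≤ (t + 2) ^ 3 := by nlinarith [sq_nonneg (t - 1)]

def g1 (t : ℝ) : ℝ := Real.log t - 3 * (t - 1) * (t + 5) / (2 * (t + 2) ^ 2)

def g (t : ℝ) : ℝ := t * Real.log t - t + 1 - 3 * (t - 1) ^ 2 / (2 * (t + 2))

lemma hasDerivAt_g1 (t : ℝ) (ht : 0 < t) :
    HasDerivAt g1 (1 / t - 27 / (t + 2) ^ 3) t := by
  have h2 : (2 * (t + 2) ^ 2 : ℝ) ≠ 0 := by positivity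
  have hu : HasDerivAt (fun t : ℝ => 3 * (t - 1) * (t + 5)) (3 * (2 * t + 4)) t := by
    have : HasDerivAt (fun t : ℝ => 3 * (t - 1) * (t + 5))
        (3 * 1 * (t + 5) + 3 * (t - 1) * 1) t := by
      exact ((hasDerivAt_id t).sub_const 1 |>.const_mul 3).mul
        ((hasDerivAt_id t).add_const 5)
    convert this using 1; ring
  have hv : HasDerivAt (fun t : ℝ => 2 * (t + 2) ^ 2) (2 * (2 * (t + 2))) t := by
    have h := (((hasDerivAt_id t).add_const 2).pow 2).const_mul 2
    exact h.congr_deriv (by norm_num)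
  have hlog : HasDerivAt Real.log t⁻¹ t := Real.hasDerivAt_log (ne_of_gt ht)
  have := hlog.sub (hu.div hv h2)
  refine this.congr_deriv ?_
  rw [one_div, eq_comm]
  congr 1
  rw [div_eq_div_iff (by positivity) (by positivity)]
  ring

lemma hasDerivAt_g (t : ℝ) (ht : 0 < t) : HasDerivAt g (g1 t) t := by
  have h2 : (2 * (t + 2) : ℝ) ≠ 0 := by positivity
  have hu : HasDerivAt (fun t : ℝ => 3 * (t - 1) ^ 2) (3 * (2 * (t - 1))) t := by
    have h := (((hasDerivAt_id t).sub_const 1).pow 2).const_mul 3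
    exact h.congr_deriv (by norm_num)
  have hv : HasDerivAt (fun t : ℝ => 2 * (t + 2)) 2 t := by
    simpa using (((hasDerivAt_id t).add_const 2).const_mul 2)
  have hml : HasDerivAt (fun x : ℝ => x * Real.log x) (Real.log t + 1) t :=
    Real.hasDerivAt_mul_log (ne_of_gt ht)
  have := ((hml.sub (hasDerivAt_id t)).add_const 1).sub (hu.div hv h2)
  refine this.congr_deriv ?_
  unfold g1
  rw [eq_comm]
  have : Real.log t + 1 - 1 = Real.log t := by ring
  rw [this]
  congr 1
  field_simp
  ring

lemma g1_deriv_nonneg (t : ℝ) (ht : 0 < t) : 0 ≤ 1 / t - 27 / (t + 2) ^ 3 := by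
  rw [sub_nonneg, div_le_div_iff₀ (by positivity) ht]
  nlinarith [cube_ineq t ht]

lemma g1_mono : MonotoneOn g1 (Set.Ioi (0 : ℝ)) := by
  have hint : interior (Set.Ioi (0 : ℝ)) = Set.Ioi 0 := interior_Ioi
  refine monotoneOn_of_deriv_nonneg (convex_Ioi 0) ?_ ?_ ?_
  · exact fun t ht => (hasDerivAt_g1 t ht).continuousAt.continuousWithinAt
  · rw [hint]; exact fun t ht => (hasDerivAt_g1 t ht).differentiableAt.differentiableWithinAt
  · rw [hint]; intro t ht
    rw [(hasDerivAt_g1 t ht).deriv]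
    exact g1_deriv_nonneg t ht

lemma g1_one : g1 1 = 0 := by simp [g1]

lemma g_one : g 1 = 0 := by simp [g]

lemma g_nonneg (t : ℝ) (ht : 0 < t) : 0 ≤ g t := by
  rcases le_total 1 t with h1 | h1
  · have hmono : MonotoneOn g (Set.Ici (1 : ℝ)) := by
      have hint : interior (Set.Ici (1 : ℝ)) = Set.Ioi 1 := interior_Ici
      refine monotoneOn_of_deriv_nonneg (convex_Ici 1) ?_ ?_ ?_
      · exact fun t ht => (hasDerivAt_g t (lt_of_lt_of_le one_pos ht)).continuousAt.continuousWithinAt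
      · rw [hint]
        exact fun t ht => (hasDerivAt_g t (lt_trans one_pos ht)).differentiableAt.differentiableWithinAt
      · rw [hint]; intro s hs
        rw [(hasDerivAt_g s (lt_trans one_pos hs)).deriv]
        have := g1_mono (Set.mem_Ioi.mpr one_pos) (Set.mem_Ioi.mpr (lt_trans one_pos hs)) (le_of_lt hs)
        rw [g1_one] at this
        exact this
    have := hmono (Set.mem_Ici.mpr le_rfl) (Set.mem_Ici.mpr h1) h1
    rwa [g_one] at this
  · have hanti : AntitoneOn g (Set.Ioc (0 : ℝ) 1) := by
      have hint : interior (Set.Ioc (0 : ℝ) 1) = Set.Ioo 0 1 := interior_Ioc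
      refine antitoneOn_of_deriv_nonpos (convex_Ioc 0 1) ?_ ?_ ?_
      · exact fun t ht => (hasDerivAt_g t ht.1).continuousAt.continuousWithinAt
      · rw [hint]
        exact fun t ht => (hasDerivAt_g t ht.1).differentiableAt.differentiableWithinAt
      · rw [hint]; intro s hs
        rw [(hasDerivAt_g s hs.1).deriv]
        have := g1_mono (Set.mem_Ioi.mpr hs.1) (Set.mem_Ioi.mpr one_pos) (le_of_lt hs.2)
        rw [g1_one] at this
        exact this
    have := hanti (Set.mem_Ioc.mpr ⟨ht, h1⟩) (Set.mem_Ioc.mpr ⟨one_pos, le_rfl⟩) h1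
    rwa [g_one] at this

/-- Pointwise refined Gibbs inequality. -/
lemma pointwise_kl (x y : ℝ) (hx : 0 < x) (hy : 0 < y) :
    3 * (x - y) ^ 2 / (2 * (x + 2 * y)) ≤ x * Real.log (x / y) - x + y := by
  have ht : 0 < x / y := div_pos hx hy
  have hg := g_nonneg (x / y) ht
  unfold g at hg
  have key : 0 ≤ y * ((x / y) * Real.log (x / y) - x / y + 1 - 3 * (x / y - 1) ^ 2 / (2 * (x / y + 2))) :=
    mul_nonneg (le_of_lt hy) hg
  have hyne : y ≠ 0 := ne_of_gt hy
  have e1 : y * ((x / y) * Real.log (x / y)) = x * Real.log (x / y) := by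
    field_simp
  have e2 : y * (3 * (x / y - 1) ^ 2 / (2 * (x / y + 2))) = 3 * (x - y) ^ 2 / (2 * (x + 2 * y)) := by
    rw [mul_div_assoc', eq_comm, div_eq_div_iff (by positivity) (by positivity)]
    field_simp
  nlinarith [key, e1, e2, mul_div_cancel₀ x hyne]

/-- Discrete Pinsker-type inequality for expectations of a `[0,1]`-valued function. -/
lemma pinsker_core {β : Type*} (u : Finset β) (A Q f : β → ℝ)
    (hA0 : ∀ z ∈ u, 0 ≤ A z) (hQ0 : ∀ z ∈ u, 0 ≤ Q z)
    (hAQ : ∀ z ∈ u, Q z = 0 → A z = 0)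
    (hf : ∀ z ∈ u, f z ∈ Set.Icc (0:ℝ) 1)
    (hA1 : ∑ z ∈ u, A z = 1) (hQ1 : ∑ z ∈ u, Q z = 1) :
    2 * ((∑ z ∈ u, A z * f z) - ∑ z ∈ u, Q z * f z) ^ 2
      ≤ ∑ z ∈ u, A z * Real.log (A z / Q z) := by
  set KL := ∑ z ∈ u, A z * Real.log (A z / Q z) with hKL
  -- step 1 : termwise lower bound for the "extended" KL summand
  have hterm : ∀ z ∈ u, 3 * (A z - Q z) ^ 2 / (2 * (A z + 2 * Q z))
      ≤ A z * Real.log (A z / Q z) - A z + Q z := by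
    intro z hz
    rcases eq_or_lt_of_le (hA0 z hz) with hA | hA
    · rcases eq_or_lt_of_le (hQ0 z hz) with hQ | hQ
      · rw [← hA, ← hQ]; norm_num
      · rw [← hA]
        have h1 : 3 * ((0:ℝ) - Q z) ^ 2 / (2 * (0 + 2 * Q z)) = 3 * Q z / 4 := by
          rw [div_eq_iff (by positivity)]; ring
        rw [h1]; simp; linarith
    · have hQ : 0 < Q z := by
        rcases eq_or_lt_of_le (hQ0 z hz) with hQ | hQ
        · exact absurd (hAQ z hz hQ.symm) (ne_of_gt hA)
        · exact hQ
      exact pointwise_kl (A z) (Q z) hA hQ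
  have hS : ∑ z ∈ u, 3 * (A z - Q z) ^ 2 / (2 * (A z + 2 * Q z)) ≤ KL := by
    calc ∑ z ∈ u, 3 * (A z - Q z) ^ 2 / (2 * (A z + 2 * Q z))
        ≤ ∑ z ∈ u, (A z * Real.log (A z / Q z) - A z + Q z) := Finset.sum_le_sum hterm
      _ = KL - (∑ z ∈ u, A z) + ∑ z ∈ u, Q z := by
          rw [hKL, Finset.sum_add_distrib, Finset.sum_sub_distrib]
      _ = KL := by rw [hA1, hQ1]; ring
  -- step 2 : Cauchy-Schwarz
  set G := fun z => Real.sqrt ((A z + 2 * Q z) / 3) with hG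
  set H := fun z => (A z - Q z) * (f z - 1/2) / G z with hH
  have hGH : ∀ z ∈ u, G z * H z = (A z - Q z) * (f z - 1/2) := by
    intro z hz
    rcases eq_or_ne (G z) 0 with h0 | h0
    · have harg : 0 ≤ (A z + 2 * Q z) / 3 := by
        have := hA0 z hz; have := hQ0 z hz; positivity
      have : (A z + 2 * Q z) / 3 = 0 := by
        have := Real.sqrt_eq_zero harg |>.mp h0
        linarith [this]
      have hAz : A z = 0 := by nlinarith [hA0 z hz, hQ0 z hz]
      have hQz : Q z = 0 := by nlinarith [hA0 z hz, hQ0 z hz]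
      rw [hH]; simp [hAz, hQz, h0]
    · rw [hH]; field_simp
  have hG2 : ∀ z ∈ u, G z ^ 2 = (A z + 2 * Q z) / 3 := by
    intro z hz
    rw [hG, Real.sq_sqrt]
    have := hA0 z hz; have := hQ0 z hz; positivity
  have hH2 : ∀ z ∈ u, H z ^ 2 ≤ (1/2) * (3 * (A z - Q z) ^ 2 / (2 * (A z + 2 * Q z))) := by
    intro z hz
    rcases eq_or_ne (A z + 2 * Q z) 0 with h0 | h0
    · have hAz : A z = 0 := by nlinarith [hA0 z hz, hQ0 z hz]
      have hQz : Q z = 0 := by nlinarith [hA0 z hz, hQ0 z hz]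
      simp [hH, hG, hAz, hQz]
    · have hpos : 0 < A z + 2 * Q z := by
        rcases eq_or_lt_of_le (by nlinarith [hA0 z hz, hQ0 z hz] : (0:ℝ) ≤ A z + 2 * Q z) with h | h
        · exact absurd h.symm h0
        · exact h
      have hGz : G z ^ 2 = (A z + 2 * Q z) / 3 := hG2 z hz
      have hGpos : 0 < G z := by
        rw [hG]; exact Real.sqrt_pos.mpr (by positivity)
      have hf1 : (f z - 1/2) ^ 2 ≤ 1/4 := by
        obtain ⟨h1, h2⟩ := hf z hz; nlinarith
      rw [hH, div_pow, hGz]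
      rw [div_le_iff₀ (by positivity)]
      have e : (1:ℝ)/2 * (3 * (A z - Q z) ^ 2 / (2 * (A z + 2 * Q z))) * ((A z + 2 * Q z) / 3)
          = (A z - Q z) ^ 2 / 4 := by
        field_simp; ring
      rw [e, mul_pow]
      nlinarith [sq_nonneg (A z - Q z)]
  have hsumG2 : ∑ z ∈ u, G z ^ 2 = 1 := by
    have e : ∑ z ∈ u, G z ^ 2 = ∑ z ∈ u, (A z / 3 + 2 / 3 * Q z) := by
      refine Finset.sum_congr rfl fun z hz => ?_
      rw [hG2 z hz]; ring
    rw [e, Finset.sum_add_distrib, ← Finset.sum_div, ← Finset.mul_sum, hA1, hQ1]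
    norm_num
  have hCS := Finset.sum_mul_sq_le_sq_mul_sq u G H
  have hDrw : (∑ z ∈ u, A z * f z) - ∑ z ∈ u, Q z * f z
      = ∑ z ∈ u, (A z - Q z) * (f z - 1/2) := by
    have h0 : ∑ z ∈ u, (A z - Q z) = 0 := by
      rw [Finset.sum_sub_distrib, hA1, hQ1]; ring
    have h1 : ∑ z ∈ u, (A z - Q z) * (f z - 1/2)
        = (∑ z ∈ u, (A z * f z - Q z * f z)) - 1/2 * ∑ z ∈ u, (A z - Q z) := by
      rw [Finset.mul_sum, ← Finset.sum_sub_distrib]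
      exact Finset.sum_congr rfl fun z _ => by ring
    rw [h1, h0, Finset.sum_sub_distrib]; ring
  have hsum_eq : ∑ z ∈ u, (A z - Q z) * (f z - 1/2) = ∑ z ∈ u, G z * H z :=
    (Finset.sum_congr rfl fun z hz => (hGH z hz).symm)
  have hsumH2 : ∑ z ∈ u, H z ^ 2 ≤ (1/2) * KL := by
    calc ∑ z ∈ u, H z ^ 2
        ≤ ∑ z ∈ u, (1/2) * (3 * (A z - Q z) ^ 2 / (2 * (A z + 2 * Q z))) :=
          Finset.sum_le_sum hH2
      _ = (1/2) * ∑ z ∈ u, 3 * (A z - Q z) ^ 2 / (2 * (A z + 2 * Q z)) := by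
          rw [Finset.mul_sum]
      _ ≤ (1/2) * KL := by linarith [hS]
  have hKLnn : 0 ≤ ∑ z ∈ u, H z ^ 2 := Finset.sum_nonneg fun z _ => sq_nonneg _
  calc 2 * ((∑ z ∈ u, A z * f z) - ∑ z ∈ u, Q z * f z) ^ 2
      = 2 * (∑ z ∈ u, G z * H z) ^ 2 := by rw [hDrw, hsum_eq]
    _ ≤ 2 * ((∑ z ∈ u, G z ^ 2) * ∑ z ∈ u, H z ^ 2) := by linarith [hCS]
    _ = 2 * ∑ z ∈ u, H z ^ 2 := by rw [hsumG2, one_mul]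
    _ ≤ KL := by linarith [hsumH2]

/-- Unnormalized version of the Pinsker-type bound. -/
lemma pinsker_mean {β : Type*} (u : Finset β) (P Q f : β → ℝ) (pb : ℝ)
    (hP0 : ∀ z ∈ u, 0 ≤ P z) (hQ0 : ∀ z ∈ u, 0 ≤ Q z) (hPQ : ∀ z ∈ u, P z ≤ Q z)
    (hf : ∀ z ∈ u, f z ∈ Set.Icc (0:ℝ) 1)
    (hQ1 : ∑ z ∈ u, Q z = 1) (hPs : ∑ z ∈ u, P z = pb) (hpb : 0 < pb) :
    2 * ((∑ z ∈ u, P z * f z) - pb * ∑ z ∈ u, Q z * f z) ^ 2 / pb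
      ≤ ∑ z ∈ u, P z * Real.log (P z / (pb * Q z)) := by
  have hpb' : pb ≠ 0 := ne_of_gt hpb
  have core := pinsker_core u (fun z => P z / pb) Q f
    (fun z hz => div_nonneg (hP0 z hz) (le_of_lt hpb))
    hQ0
    (fun z hz hQz => by
      have h1 : P z ≤ 0 := hQz ▸ hPQ z hz
      have h2 : P z = 0 := le_antisymm h1 (hP0 z hz)
      simp [h2])
    hf
    (by rw [← Finset.sum_div, hPs, div_self hpb'])
    hQ1
  have e1 : ∑ z ∈ u, (P z / pb) * f z = (∑ z ∈ u, P z * f z) / pb := by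
    rw [Finset.sum_div]
    exact Finset.sum_congr rfl fun z _ => by ring
  have e2 : ∑ z ∈ u, (P z / pb) * Real.log ((P z / pb) / Q z)
      = (∑ z ∈ u, P z * Real.log (P z / (pb * Q z))) / pb := by
    rw [Finset.sum_div]
    refine Finset.sum_congr rfl fun z _ => ?_
    rw [div_div]
    ring
  rw [e1, e2] at core
  have e3 : (∑ z ∈ u, P z * f z) / pb - ∑ z ∈ u, Q z * f z
      = ((∑ z ∈ u, P z * f z) - pb * ∑ z ∈ u, Q z * f z) / pb := by
    field_simp
  rw [e3, div_pow] at core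
  calc 2 * ((∑ z ∈ u, P z * f z) - pb * ∑ z ∈ u, Q z * f z) ^ 2 / pb
      = pb * (2 * (((∑ z ∈ u, P z * f z) - pb * ∑ z ∈ u, Q z * f z) ^ 2 / pb ^ 2)) := by
        field_simp
    _ ≤ pb * ((∑ z ∈ u, P z * Real.log (P z / (pb * Q z))) / pb) :=
        mul_le_mul_of_nonneg_left core (le_of_lt hpb)
    _ = ∑ z ∈ u, P z * Real.log (P z / (pb * Q z)) := by field_simp

end IRProof

namespace IRHelp

/-- Rewriting a sum over the sample space as a sum over the image of a random variable. -/
lemma sum_weight_comp {Ω β : Type*} [Fintype Ω] (q : Ω → ℝ) (X : Ω → β) (G : β → ℝ) :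
    ∑ ω, q ω * G (X ω)
      = ∑ x ∈ Finset.univ.image X, probEq q X x * G x := by
  rw [eq_comm]
  calc ∑ x ∈ Finset.univ.image X, probEq q X x * G x
      = ∑ x ∈ Finset.univ.image X, ∑ ω, (if X ω = x then q ω * G x else 0) := by
        refine Finset.sum_congr rfl fun x _ => ?_
        rw [probEq, Finset.sum_mul]
        exact Finset.sum_congr rfl fun ω _ => by split <;> simp
    _ = ∑ ω, ∑ x ∈ Finset.univ.image X, (if X ω = x then q ω * G x else 0) :=
        Finset.sum_comm
    _ = ∑ ω, q ω * G (X ω) := by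
        refine Finset.sum_congr rfl fun ω _ => ?_
        rw [Finset.sum_ite_eq (Finset.univ.image X) (X ω) (fun x => q ω * G x)]
        simp [Finset.mem_image_of_mem]

/-- Partitioning a sum over the sample space according to the value of a random variable. -/
lemma sum_partition {Ω V : Type*} [Fintype Ω] [Fintype V] (q : Ω → ℝ) (X : Ω → V)
    (G : Ω → ℝ) :
    ∑ ω, q ω * G ω = ∑ a : V, ∑ ω, (if X ω = a then q ω else 0) * G ω := by
  rw [Finset.sum_comm]
  refine Finset.sum_congr rfl fun ω _ => ?_
  rw [eq_comm]
  calc ∑ a : V, (if X ω = a then q ω else 0) * G ω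
      = (∑ a : V, if X ω = a then q ω else 0) * G ω := by rw [Finset.sum_mul]
    _ = q ω * G ω := by
        rw [Finset.sum_ite_eq Finset.univ (X ω) (fun _ => q ω)]
        simp

/-- Consequence of the independence of `At` from `(Astar, Y)`. -/
lemma indep_apply {Ω V : Type*} [Fintype Ω] [Fintype V]
    (p : Ω → ℝ) (Astar At : Ω → V) (Y : Ω → V → ℝ)
    (hindep : ∀ (a b : V) (y : V → ℝ),
      probEq p (fun ω => (At ω, Astar ω, Y ω)) (a, b, y) =
        probEq p At a * probEq p (fun ω => (Astar ω, Y ω)) (b, y))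
    (a : V) (F : V → (V → ℝ) → ℝ) :
    ∑ ω, (if At ω = a then p ω else 0) * F (Astar ω) (Y ω)
      = probEq p At a * ∑ ω, p ω * F (Astar ω) (Y ω) := by
  have key : ∀ x : V × (V → ℝ),
      probEq (fun ω => if At ω = a then p ω else 0) (fun ω => (Astar ω, Y ω)) x
        = probEq p At a * probEq p (fun ω => (Astar ω, Y ω)) x := by
    intro x
    have e : probEq (fun ω => if At ω = a then p ω else 0) (fun ω => (Astar ω, Y ω)) x
        = probEq p (fun ω => (At ω, Astar ω, Y ω)) (a, x.1, x.2) := by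
      rw [probEq, probEq]
      refine Finset.sum_congr rfl fun ω _ => ?_
      by_cases h1 : At ω = a <;> by_cases h2 : (Astar ω, Y ω) = x <;>
        simp_all [Prod.ext_iff]
    rw [e, hindep a x.1 x.2, Prod.mk.eta]
  have h1 := sum_weight_comp (fun ω => if At ω = a then p ω else 0)
    (fun ω => (Astar ω, Y ω)) (fun x => F x.1 x.2)
  have h2 := sum_weight_comp p (fun ω => (Astar ω, Y ω)) (fun x => F x.1 x.2)
  rw [show (∑ ω, (if At ω = a then p ω else 0) * F (Astar ω) (Y ω)) = _ from h1,
      show (∑ ω, p ω * F (Astar ω) (Y ω)) = _ from h2, Finset.mul_sum]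
  exact Finset.sum_congr rfl fun x _ => by rw [key x]; ring


end IRHelp

/-- The clique observation map: playing in clique `c` reveals the rewards of all arms in `c`. -/
def zfc {V : Type*} {m : ℕ} (cls : V → Fin m) (c : Fin m) (y : V → ℝ) : V → Option ℝ :=
  fun v => if cls v = c then some (y v) else none

/-- Variant of `sum_weight_comp` with an explicit carrier finset. -/
lemma sum_weight_comp' {Ω β : Type*} [Fintype Ω] (q : Ω → ℝ) (X : Ω → β) (G : β → ℝ)
    (u : Finset β) (hu : ∀ ω, X ω ∈ u) :
    ∑ ω, q ω * G (X ω) = ∑ x ∈ u, probEq q X x * G x := by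
  rw [eq_comm]
  calc ∑ x ∈ u, probEq q X x * G x
      = ∑ x ∈ u, ∑ ω, (if X ω = x then q ω * G x else 0) := by
        refine Finset.sum_congr rfl fun x _ => ?_
        rw [probEq, Finset.sum_mul]
        exact Finset.sum_congr rfl fun ω _ => by split <;> simp
    _ = ∑ ω, ∑ x ∈ u, (if X ω = x then q ω * G x else 0) :=
        Finset.sum_comm
    _ = ∑ ω, q ω * G (X ω) := by
        refine Finset.sum_congr rfl fun ω _ => ?_
        rw [Finset.sum_ite_eq u (X ω) (fun x => q ω * G x)]
        simp [hu ω]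

section MainLemmas

variable {Ω V : Type*} [Fintype Ω] [Fintype V] {m : ℕ}
  (p : Ω → ℝ) (Astar At : Ω → V) (Y : Ω → V → ℝ) (cls : V → Fin m)

/-- Factorization of the observation probability. -/
lemma obs_prob
    (hindep : ∀ (a b : V) (y : V → ℝ),
      probEq p (fun ω => (At ω, Astar ω, Y ω)) (a, b, y) =
        probEq p At a * probEq p (fun ω => (Astar ω, Y ω)) (b, y))
    (a : V) (z : V → Option ℝ) :
    probEq p (fun ω => (At ω, zfc cls (cls (At ω)) (Y ω))) (a, z)
      = probEq p At a * probEq p (fun ω => zfc cls (cls a) (Y ω)) z := by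
  have e1 : probEq p (fun ω => (At ω, zfc cls (cls (At ω)) (Y ω))) (a, z)
      = ∑ ω, (if At ω = a then p ω else 0) *
          (if zfc cls (cls a) (Y ω) = z then (1:ℝ) else 0) := by
    rw [probEq]
    refine Finset.sum_congr rfl fun ω _ => ?_
    by_cases h1 : At ω = a
    · subst h1
      by_cases h2 : zfc cls (cls (At ω)) (Y ω) = z <;> simp [h2]
    · simp [h1, Prod.ext_iff]
  calc probEq p (fun ω => (At ω, zfc cls (cls (At ω)) (Y ω))) (a, z)
      = ∑ ω, (if At ω = a then p ω else 0) *
          (if zfc cls (cls a) (Y ω) = z then (1:ℝ) else 0) := e1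
    _ = probEq p At a * ∑ ω, p ω * (if zfc cls (cls a) (Y ω) = z then (1:ℝ) else 0) :=
        IRHelp.indep_apply p Astar At Y hindep a
          (fun _ y => if zfc cls (cls a) y = z then (1:ℝ) else 0)
    _ = probEq p At a * probEq p (fun ω => zfc cls (cls a) (Y ω)) z := by
        congr 1
        rw [probEq]
        exact Finset.sum_congr rfl fun ω _ => by split <;> simp

/-- Factorization of the joint probability of `Astar` and the observation. -/
lemma obs_prob2
    (hindep : ∀ (a b : V) (y : V → ℝ),
      probEq p (fun ω => (At ω, Astar ω, Y ω)) (a, b, y) =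
        probEq p At a * probEq p (fun ω => (Astar ω, Y ω)) (b, y))
    (a b : V) (z : V → Option ℝ) :
    probEq p (fun ω => (Astar ω, (At ω, zfc cls (cls (At ω)) (Y ω)))) (b, (a, z))
      = probEq p At a * probEq p (fun ω => (Astar ω, zfc cls (cls a) (Y ω))) (b, z) := by
  have e1 : probEq p (fun ω => (Astar ω, (At ω, zfc cls (cls (At ω)) (Y ω)))) (b, (a, z))
      = ∑ ω, (if At ω = a then p ω else 0) *
          (if Astar ω = b ∧ zfc cls (cls a) (Y ω) = z then (1:ℝ) else 0) := by
    rw [probEq]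
    refine Finset.sum_congr rfl fun ω _ => ?_
    by_cases h1 : At ω = a
    · subst h1
      by_cases h2 : Astar ω = b <;> by_cases h3 : zfc cls (cls (At ω)) (Y ω) = z <;>
        simp [h2, h3, Prod.ext_iff]
    · simp [h1, Prod.ext_iff]
  calc probEq p (fun ω => (Astar ω, (At ω, zfc cls (cls (At ω)) (Y ω)))) (b, (a, z))
      = ∑ ω, (if At ω = a then p ω else 0) *
          (if Astar ω = b ∧ zfc cls (cls a) (Y ω) = z then (1:ℝ) else 0) := e1
    _ = probEq p At a * ∑ ω, p ω *
          (if Astar ω = b ∧ zfc cls (cls a) (Y ω) = z then (1:ℝ) else 0) :=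
        IRHelp.indep_apply p Astar At Y hindep a
          (fun b' y => if b' = b ∧ zfc cls (cls a) y = z then (1:ℝ) else 0)
    _ = probEq p At a * probEq p (fun ω => (Astar ω, zfc cls (cls a) (Y ω))) (b, z) := by
        congr 1
        rw [probEq]
        refine Finset.sum_congr rfl fun ω _ => ?_
        by_cases h2 : Astar ω = b <;> by_cases h3 : zfc cls (cls a) (Y ω) = z <;>
          simp [h2, h3, Prod.ext_iff]

end MainLemmas

/-- Graph feedback information ratio bound: if arms are the vertices of a graph `G` with a
clique cover of size `m` (given by `cls`), playing arm `a` reveals the `[0,1]`-valued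
rewards of all arms in its clique, and `A_t` is identically distributed with `A*` and
independent of `(A*, Y)`, then the information ratio satisfies `Γ_t ≤ m/2`. -/
theorem information_ratio_le_half_clique_cover
    {Ω V : Type*} [Fintype Ω] [Fintype V] (G : SimpleGraph V)
    (m : ℕ) (cls : V → Fin m) (hcls : IsCliqueCovering G cls)
    (p : Ω → ℝ) (hp : ∀ ω, 0 ≤ p ω) (hpsum : ∑ ω, p ω = 1)
    (Astar At : Ω → V) (Y : Ω → V → ℝ)
    (hY : ∀ ω v, Y ω v ∈ Set.Icc (0 : ℝ) 1)
    (hmatch : ∀ a : V, probEq p At a = probEq p Astar a)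
    (hindep : ∀ (a b : V) (y : V → ℝ),
      probEq p (fun ω => (At ω, Astar ω, Y ω)) (a, b, y) =
        probEq p At a * probEq p (fun ω => (Astar ω, Y ω)) (b, y)) :
    (pmfExp p (fun ω => Y ω (Astar ω) - Y ω (At ω))) ^ 2 /
        mutualInfo p Astar
          (fun ω => (At ω, fun v : V =>
            if cls v = cls (At ω) then some (Y ω v) else none)) ≤ m / 2 := by
  classical
  -- reduce to the `zfc` formulation of the observation
  suffices hmain : (pmfExp p (fun ω => Y ω (Astar ω) - Y ω (At ω))) ^ 2 /
      mutualInfo p Astar (fun ω => (At ω, zfc cls (cls (At ω)) (Y ω))) ≤ m / 2 by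
    exact hmain
  -- basic facts
  have hprnn : ∀ b, 0 ≤ probEq p Astar b := fun b =>
    Finset.sum_nonneg fun ω _ => by by_cases h : Astar ω = b <;> simp [h, hp ω]
  have hsingle : ∀ (X : Ω → V) (ω : Ω), p ω ≤ probEq p X (X ω) := by
    intro X ω
    have := Finset.single_le_sum (f := fun ω' => if X ω' = X ω then p ω' else 0)
      (fun ω' _ => by by_cases h : X ω' = X ω <;> simp [h, hp ω']) (Finset.mem_univ ω)
    simpa [probEq] using this
  -- quantities
  set r := fun b => ∑ ω, (if Astar ω = b then p ω else 0) * Y ω b with hr_def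
  set Ee := fun b => ∑ ω, p ω * Y ω b with hEe_def
  set Dd := fun b => r b - probEq p Astar b * Ee b with hDd_def
  set K := fun c => mutualInfo p Astar (fun ω => zfc cls c (Y ω)) with hK_def
  set Tt := fun (c : Fin m) (b : V) => ∑ ω, (if Astar ω = b then p ω else 0) *
      Real.log (probEq p (fun ω' => (Astar ω', zfc cls c (Y ω'))) (b, zfc cls c (Y ω)) /
        (probEq p Astar b * probEq p (fun ω' => zfc cls c (Y ω')) (zfc cls c (Y ω))))
    with hTt_def
  set qq := fun c : Fin m => ∑ a, (if cls a = c then probEq p Astar a else 0) with hqq_def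
  set ss := fun c : Fin m =>
    ∑ b, (if cls b = c then Dd b ^ 2 / probEq p Astar b else 0) with hss_def
  set sb := fun c : Fin m => ∑ b, (if cls b = c then Dd b else 0) with hsb_def
  have hr0 : ∀ b, 0 ≤ r b := fun b =>
    Finset.sum_nonneg fun ω _ => by
      by_cases h : Astar ω = b
      · simp only [h, if_pos]
        exact mul_nonneg (hp ω) (hY ω b).1
      · simp [h]
  have hrle : ∀ b, r b ≤ probEq p Astar b := by
    intro b
    rw [hr_def]
    refine Finset.sum_le_sum fun ω _ => ?_
    by_cases h : Astar ω = b
    · simp only [h, if_pos]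
      calc p ω * Y ω b ≤ p ω * 1 := mul_le_mul_of_nonneg_left (hY ω b).2 (hp ω)
        _ = p ω := mul_one _
    · simp [h]
  have hD0 : ∀ b, probEq p Astar b = 0 → Dd b = 0 := by
    intro b h0
    have h1 : r b = 0 := le_antisymm (h0 ▸ hrle b) (hr0 b)
    simp [hDd_def, h0, h1]
  -- regret decomposition
  have hregret : pmfExp p (fun ω => Y ω (Astar ω) - Y ω (At ω)) = ∑ b, Dd b := by
    have e0 : pmfExp p (fun ω => Y ω (Astar ω) - Y ω (At ω))
        = (∑ ω, p ω * Y ω (Astar ω)) - ∑ ω, p ω * Y ω (At ω) := by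
      rw [pmfExp, ← Finset.sum_sub_distrib]
      exact Finset.sum_congr rfl fun ω _ => by ring
    have e1 : ∑ ω, p ω * Y ω (Astar ω) = ∑ b, r b := by
      rw [IRHelp.sum_partition p Astar (fun ω => Y ω (Astar ω))]
      refine Finset.sum_congr rfl fun b _ => Finset.sum_congr rfl fun ω _ => ?_
      by_cases h : Astar ω = b <;> simp [h]
    have e2 : ∑ ω, p ω * Y ω (At ω) = ∑ a, probEq p Astar a * Ee a := by
      rw [IRHelp.sum_partition p At (fun ω => Y ω (At ω))]
      refine Finset.sum_congr rfl fun a _ => ?_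
      calc ∑ ω, (if At ω = a then p ω else 0) * Y ω (At ω)
          = ∑ ω, (if At ω = a then p ω else 0) * Y ω a :=
            Finset.sum_congr rfl fun ω _ => by by_cases h : At ω = a <;> simp [h]
        _ = probEq p At a * ∑ ω, p ω * Y ω a :=
            IRHelp.indep_apply p Astar At Y hindep a (fun _ y => y a)
        _ = probEq p Astar a * Ee a := by rw [hmatch a]
    rw [e0, e1, e2, ← Finset.sum_sub_distrib]
  -- decomposition of K c over the optimal arm
  have hKdec : ∀ c, K c = ∑ b, Tt c b := by
    intro c
    calc K c
        = ∑ b, ∑ ω, (if Astar ω = b then p ω else 0) *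
            Real.log (probEq p (fun ω' => (Astar ω', zfc cls c (Y ω')))
                (Astar ω, zfc cls c (Y ω)) /
              (probEq p Astar (Astar ω) *
                probEq p (fun ω' => zfc cls c (Y ω')) (zfc cls c (Y ω)))) :=
          IRHelp.sum_partition p Astar _
      _ = ∑ b, Tt c b := by
          refine Finset.sum_congr rfl fun b _ => Finset.sum_congr rfl fun ω _ => ?_
          by_cases h : Astar ω = b
          · rw [h]
          · simp [h]
  -- per-arm Pinsker bound
  have hTlb : ∀ c b, (if cls b = c then 2 * Dd b ^ 2 / probEq p Astar b else 0) ≤ Tt c b := by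
    intro c b
    rcases eq_or_lt_of_le (hprnn b) with h0 | hpos
    · have hT0 : Tt c b = 0 := by
        rw [hTt_def]
        refine Finset.sum_eq_zero fun ω _ => ?_
        by_cases h : Astar ω = b
        · have hle := hsingle Astar ω
          rw [h, ← h0] at hle
          have : p ω = 0 := le_antisymm hle (hp ω)
          simp [h, this]
        · simp [h]
      rw [hT0]
      have hDb : Dd b = 0 := hD0 b h0.symm
      split
      · rw [hDb]; norm_num
      · exact le_refl 0
    · -- positive probability of optimality
      set u := Finset.univ.image (fun ω => zfc cls c (Y ω)) with hu_def
      have hu : ∀ ω, zfc cls c (Y ω) ∈ u := fun ω => by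
        rw [hu_def]; exact Finset.mem_image_of_mem _ (Finset.mem_univ ω)
      set Pz := fun z => probEq p (fun ω => (Astar ω, zfc cls c (Y ω))) (b, z) with hPz_def
      set Qz := fun z => probEq p (fun ω => zfc cls c (Y ω)) z with hQz_def
      set fz := fun z : V → Option ℝ => if cls b = c then (z b).getD 0 else 0 with hfz_def
      have hnest : ∀ z,
          probEq (fun ω => if Astar ω = b then p ω else 0) (fun ω => zfc cls c (Y ω)) z
            = Pz z := by
        intro z
        rw [hPz_def]
        simp only [probEq]
        refine Finset.sum_congr rfl fun ω _ => ?_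
        by_cases h1 : Astar ω = b <;> by_cases h2 : zfc cls c (Y ω) = z <;>
          simp [h1, h2, Prod.ext_iff]
      have hTval : Tt c b
          = ∑ z ∈ u, Pz z * Real.log (Pz z / (probEq p Astar b * Qz z)) := by
        calc Tt c b
            = ∑ z ∈ u, probEq (fun ω => if Astar ω = b then p ω else 0)
                (fun ω => zfc cls c (Y ω)) z *
                  Real.log (Pz z / (probEq p Astar b * Qz z)) :=
              sum_weight_comp' (fun ω => if Astar ω = b then p ω else 0)
                (fun ω => zfc cls c (Y ω))
                (fun z => Real.log (Pz z / (probEq p Astar b * Qz z))) u hu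
          _ = ∑ z ∈ u, Pz z * Real.log (Pz z / (probEq p Astar b * Qz z)) :=
              Finset.sum_congr rfl fun z _ => by rw [hnest z]
      have hP0 : ∀ z ∈ u, 0 ≤ Pz z := fun z _ =>
        Finset.sum_nonneg fun ω _ => by split <;> simp [hp ω]
      have hQ0 : ∀ z ∈ u, 0 ≤ Qz z := fun z _ =>
        Finset.sum_nonneg fun ω _ => by split <;> simp [hp ω]
      have hPQ : ∀ z ∈ u, Pz z ≤ Qz z := by
        intro z _
        rw [hPz_def, hQz_def]
        simp only [probEq]
        refine Finset.sum_le_sum fun ω _ => ?_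
        by_cases h2 : zfc cls c (Y ω) = z
        · by_cases h1 : Astar ω = b <;> simp [h1, h2, Prod.ext_iff, hp ω]
        · simp [h2, Prod.ext_iff]
      have hfmem : ∀ z ∈ u, fz z ∈ Set.Icc (0:ℝ) 1 := by
        intro z hz
        rw [hu_def] at hz
        rcases Finset.mem_image.mp hz with ⟨ω, _, rfl⟩
        rw [hfz_def]
        dsimp only
        split
        · rename_i hbc
          simpa [zfc, hbc] using hY ω b
        · exact ⟨le_refl 0, zero_le_one⟩
      have hQ1 : ∑ z ∈ u, Qz z = 1 := by
        calc ∑ z ∈ u, Qz z = ∑ z ∈ u, Qz z * 1 := by simp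
          _ = ∑ ω, p ω * 1 :=
              (sum_weight_comp' p (fun ω => zfc cls c (Y ω)) (fun _ => (1:ℝ)) u hu).symm
          _ = 1 := by simpa using hpsum
      have hPs : ∑ z ∈ u, Pz z = probEq p Astar b := by
        calc ∑ z ∈ u, Pz z
            = ∑ z ∈ u, probEq (fun ω => if Astar ω = b then p ω else 0)
                (fun ω => zfc cls c (Y ω)) z * 1 := by
              refine Finset.sum_congr rfl fun z _ => ?_
              rw [hnest z, mul_one]
          _ = ∑ ω, (if Astar ω = b then p ω else 0) * 1 :=
              (sum_weight_comp' _ (fun ω => zfc cls c (Y ω)) (fun _ => (1:ℝ)) u hu).symm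
          _ = probEq p Astar b := by rw [probEq]; exact Finset.sum_congr rfl fun ω _ => mul_one _
      have hfY : ∀ ω, fz (zfc cls c (Y ω)) = (if cls b = c then Y ω b else 0) := by
        intro ω
        rw [hfz_def]
        dsimp only
        by_cases hbc : cls b = c <;> simp [zfc, hbc]
      have hPf : ∑ z ∈ u, Pz z * fz z = (if cls b = c then r b else 0) := by
        calc ∑ z ∈ u, Pz z * fz z
            = ∑ z ∈ u, probEq (fun ω => if Astar ω = b then p ω else 0)
                (fun ω => zfc cls c (Y ω)) z * fz z := by
              refine Finset.sum_congr rfl fun z _ => ?_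
              rw [hnest z]
          _ = ∑ ω, (if Astar ω = b then p ω else 0) * fz (zfc cls c (Y ω)) :=
              (sum_weight_comp' _ (fun ω => zfc cls c (Y ω)) fz u hu).symm
          _ = (if cls b = c then r b else 0) := by
              by_cases hbc : cls b = c
              · rw [if_pos hbc, hr_def]
                refine Finset.sum_congr rfl fun ω _ => ?_
                rw [hfY ω, if_pos hbc]
              · rw [if_neg hbc]
                refine Finset.sum_eq_zero fun ω _ => ?_
                rw [hfY ω, if_neg hbc, mul_zero]
      have hQf : ∑ z ∈ u, Qz z * fz z = (if cls b = c then Ee b else 0) := by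
        calc ∑ z ∈ u, Qz z * fz z
            = ∑ ω, p ω * fz (zfc cls c (Y ω)) :=
              (sum_weight_comp' p (fun ω => zfc cls c (Y ω)) fz u hu).symm
          _ = (if cls b = c then Ee b else 0) := by
              by_cases hbc : cls b = c
              · rw [if_pos hbc, hEe_def]
                refine Finset.sum_congr rfl fun ω _ => ?_
                rw [hfY ω, if_pos hbc]
              · rw [if_neg hbc]
                refine Finset.sum_eq_zero fun ω _ => ?_
                rw [hfY ω, if_neg hbc, mul_zero]
      have main := IRProof.pinsker_mean u Pz Qz fz (probEq p Astar b)
        hP0 hQ0 hPQ hfmem hQ1 hPs hpos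
      rw [hPf, hQf, ← hTval] at main
      by_cases hbc : cls b = c
      · simp only [if_pos hbc] at main
        rw [if_pos hbc]
        simpa [hDd_def] using main
      · simp only [if_neg hbc] at main
        rw [if_neg hbc]
        simpa using main
  -- lower bound on K c
  have hKlb : ∀ c, 2 * ss c ≤ K c := by
    intro c
    rw [hKdec c, hss_def, Finset.mul_sum]
    refine Finset.sum_le_sum fun b _ => ?_
    have := hTlb c b
    refine le_trans (le_of_eq ?_) this
    by_cases hbc : cls b = c <;> simp [hbc] <;> ring
  -- decomposition of the mutual information
  have hIdec : mutualInfo p Astar (fun ω => (At ω, zfc cls (cls (At ω)) (Y ω)))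
      = ∑ a, probEq p At a * K (cls a) := by
    have step1 : mutualInfo p Astar (fun ω => (At ω, zfc cls (cls (At ω)) (Y ω)))
        = ∑ ω, p ω * Real.log
            (probEq p (fun ω' => (Astar ω', zfc cls (cls (At ω)) (Y ω')))
                (Astar ω, zfc cls (cls (At ω)) (Y ω)) /
              (probEq p Astar (Astar ω) *
                probEq p (fun ω' => zfc cls (cls (At ω)) (Y ω'))
                  (zfc cls (cls (At ω)) (Y ω)))) := by
      rw [mutualInfo]
      refine Finset.sum_congr rfl fun ω _ => ?_
      by_cases hpω : p ω = 0
      · rw [hpω]; ring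
      · have hpω' : 0 < p ω := lt_of_le_of_ne (hp ω) (Ne.symm hpω)
        have halpos : 0 < probEq p At (At ω) := lt_of_lt_of_le hpω' (hsingle At ω)
        have halne : probEq p At (At ω) ≠ 0 := ne_of_gt halpos
        congr 1
        rw [obs_prob2 p Astar At Y cls hindep (At ω) (Astar ω) (zfc cls (cls (At ω)) (Y ω)),
            obs_prob p Astar At Y cls hindep (At ω) (zfc cls (cls (At ω)) (Y ω))]
        congr 1
        rw [show probEq p Astar (Astar ω) *
              (probEq p At (At ω) *
                probEq p (fun ω' => zfc cls (cls (At ω)) (Y ω')) (zfc cls (cls (At ω)) (Y ω)))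
            = probEq p At (At ω) *
              (probEq p Astar (Astar ω) *
                probEq p (fun ω' => zfc cls (cls (At ω)) (Y ω')) (zfc cls (cls (At ω)) (Y ω)))
          from by ring]
        exact mul_div_mul_left _ _ halne
    rw [step1, IRHelp.sum_partition p At _]
    refine Finset.sum_congr rfl fun a _ => ?_
    calc ∑ ω, (if At ω = a then p ω else 0) * Real.log
            (probEq p (fun ω' => (Astar ω', zfc cls (cls (At ω)) (Y ω')))
                (Astar ω, zfc cls (cls (At ω)) (Y ω)) /
              (probEq p Astar (Astar ω) *
                probEq p (fun ω' => zfc cls (cls (At ω)) (Y ω'))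
                  (zfc cls (cls (At ω)) (Y ω))))
        = ∑ ω, (if At ω = a then p ω else 0) * Real.log
            (probEq p (fun ω' => (Astar ω', zfc cls (cls a) (Y ω')))
                (Astar ω, zfc cls (cls a) (Y ω)) /
              (probEq p Astar (Astar ω) *
                probEq p (fun ω' => zfc cls (cls a) (Y ω'))
                  (zfc cls (cls a) (Y ω)))) := by
          refine Finset.sum_congr rfl fun ω _ => ?_
          by_cases h : At ω = a
          · rw [h]
          · simp [h]
      _ = probEq p At a * ∑ ω, p ω * Real.log
            (probEq p (fun ω' => (Astar ω', zfc cls (cls a) (Y ω')))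
                (Astar ω, zfc cls (cls a) (Y ω)) /
              (probEq p Astar (Astar ω) *
                probEq p (fun ω' => zfc cls (cls a) (Y ω'))
                  (zfc cls (cls a) (Y ω)))) :=
          IRHelp.indep_apply p Astar At Y hindep a
            (fun b' y => Real.log
              (probEq p (fun ω' => (Astar ω', zfc cls (cls a) (Y ω')))
                  (b', zfc cls (cls a) y) /
                (probEq p Astar b' *
                  probEq p (fun ω' => zfc cls (cls a) (Y ω')) (zfc cls (cls a) y))))
      _ = probEq p At a * K (cls a) := rfl
  -- assembly
  have hIfib : ∑ a, probEq p At a * K (cls a) = ∑ c, qq c * K c := by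
    have e0 : ∀ a, probEq p At a = probEq p Astar a := hmatch
    calc ∑ a, probEq p At a * K (cls a)
        = ∑ a, probEq p Astar a * K (cls a) :=
          Finset.sum_congr rfl fun a _ => by rw [e0 a]
      _ = _ := IRHelp.sum_partition (fun a => probEq p Astar a) cls (fun a => K (cls a))
      _ = ∑ c, qq c * K c := by
          refine Finset.sum_congr rfl fun c _ => ?_
          rw [hqq_def]
          dsimp only
          rw [Finset.sum_mul]
          refine Finset.sum_congr rfl fun a _ => ?_
          by_cases h : cls a = c <;> simp [h]
  have hqq0 : ∀ c, 0 ≤ qq c := fun c =>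
    Finset.sum_nonneg fun a _ => by split <;> simp [hprnn a]
  have hss0 : ∀ c, 0 ≤ ss c := fun c =>
    Finset.sum_nonneg fun b _ => by
      split
      · exact div_nonneg (sq_nonneg _) (hprnn b)
      · exact le_refl 0
  have hIlb : 2 * ∑ c, qq c * ss c
      ≤ mutualInfo p Astar (fun ω => (At ω, zfc cls (cls (At ω)) (Y ω))) := by
    rw [hIdec, hIfib, Finset.mul_sum]
    refine Finset.sum_le_sum fun c _ => ?_
    calc 2 * (qq c * ss c) = qq c * (2 * ss c) := by ring
      _ ≤ qq c * K c := mul_le_mul_of_nonneg_left (hKlb c) (hqq0 c)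
  have hRsum : ∑ b, Dd b = ∑ c, sb c := by
    calc ∑ b, Dd b = ∑ b, Dd b * 1 := by simp
      _ = _ := IRHelp.sum_partition Dd cls (fun _ => (1:ℝ))
      _ = ∑ c, sb c := by
          refine Finset.sum_congr rfl fun c _ => ?_
          rw [hsb_def]
          dsimp only
          refine Finset.sum_congr rfl fun b _ => ?_
          by_cases h : cls b = c <;> simp [h]
  have hCS1 : (∑ c, sb c) ^ 2 ≤ (m : ℝ) * ∑ c, sb c ^ 2 := by
    have h := Finset.sum_mul_sq_le_sq_mul_sq Finset.univ (fun _ : Fin m => (1:ℝ)) sb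
    simpa [Finset.card_univ] using h
  have hCS2 : ∀ c, sb c ^ 2 ≤ qq c * ss c := by
    intro c
    have h := Finset.sum_mul_sq_le_sq_mul_sq Finset.univ
      (fun b => if cls b = c then Real.sqrt (probEq p Astar b) else 0)
      (fun b => if cls b = c then Dd b / Real.sqrt (probEq p Astar b) else 0)
    have e1 : ∑ b, (if cls b = c then Real.sqrt (probEq p Astar b) else 0) *
        (if cls b = c then Dd b / Real.sqrt (probEq p Astar b) else 0) = sb c := by
      rw [hsb_def]
      refine Finset.sum_congr rfl fun b _ => ?_
      by_cases hbc : cls b = c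
      · rw [if_pos hbc, if_pos hbc, if_pos hbc]
        rcases eq_or_lt_of_le (hprnn b) with h0 | hposb
        · rw [hD0 b h0.symm, ← h0]
          simp
        · rw [mul_div_cancel₀ _ (by positivity : Real.sqrt (probEq p Astar b) ≠ 0)]
      · simp [hbc]
    have e2 : ∑ b, (if cls b = c then Real.sqrt (probEq p Astar b) else 0) ^ 2 = qq c := by
      rw [hqq_def]
      refine Finset.sum_congr rfl fun b _ => ?_
      by_cases hbc : cls b = c
      · rw [if_pos hbc, if_pos hbc, Real.sq_sqrt (hprnn b)]
      · simp [hbc]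
    have e3 : ∑ b, (if cls b = c then Dd b / Real.sqrt (probEq p Astar b) else 0) ^ 2
        = ss c := by
      rw [hss_def]
      refine Finset.sum_congr rfl fun b _ => ?_
      by_cases hbc : cls b = c
      · rw [if_pos hbc, if_pos hbc, div_pow, Real.sq_sqrt (hprnn b)]
      · simp [hbc]
    rw [e1, e2, e3] at h
    exact h
  have hfinal : (∑ b, Dd b) ^ 2 ≤ (m : ℝ) / 2 *
      mutualInfo p Astar (fun ω => (At ω, zfc cls (cls (At ω)) (Y ω))) := by
    calc (∑ b, Dd b) ^ 2 = (∑ c, sb c) ^ 2 := by rw [hRsum]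
      _ ≤ (m : ℝ) * ∑ c, sb c ^ 2 := hCS1
      _ ≤ (m : ℝ) * ∑ c, qq c * ss c :=
          mul_le_mul_of_nonneg_left (Finset.sum_le_sum fun c _ => hCS2 c) (by positivity)
      _ = (m : ℝ) / 2 * (2 * ∑ c, qq c * ss c) := by ring
      _ ≤ (m : ℝ) / 2 * mutualInfo p Astar (fun ω => (At ω, zfc cls (cls (At ω)) (Y ω))) :=
          mul_le_mul_of_nonneg_left hIlb (by positivity)
  have hInn : 0 ≤ mutualInfo p Astar (fun ω => (At ω, zfc cls (cls (At ω)) (Y ω))) := by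
    refine le_trans ?_ hIlb
    have : 0 ≤ ∑ c, qq c * ss c :=
      Finset.sum_nonneg fun c _ => mul_nonneg (hqq0 c) (hss0 c)
    linarith
  rcases eq_or_lt_of_le hInn with h0 | hposI
  · rw [← h0, div_zero]
    positivity
  · rw [div_le_iff₀ hposI, hregret]
    exact hfinal
end
end

section
/- If the information ratio of Thompson sampling is bounded: Γ_t ≤ Γ almost surely for all 1 ≤ t ≤ T, then the Bayesian regret satisfies E[Regret(T)] ≤ √(Γ · H(α₁) · T), where H(α₁) is the entropy of the prior distribution of the optimal arm. -/
open scoped Classical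

noncomputable section

variable {Ω : Type*} [Fintype Ω]

namespace RVR

variable {Ω : Type*} [Fintype Ω] {α β γ δ : Type*}

lemma probEq_nonneg (p : Ω → ℝ) (hp : ∀ ω, 0 ≤ p ω) (X : Ω → α) (a : α) :
    0 ≤ probEq p X a :=
  Finset.sum_nonneg fun ω _ => by split <;> simp [hp ω]

lemma le_probEq (p : Ω → ℝ) (hp : ∀ ω, 0 ≤ p ω) (X : Ω → α) (ω : Ω) :
    p ω ≤ probEq p X (X ω) := by
  calc p ω = if X ω = X ω then p ω else 0 := by simp
  _ ≤ ∑ ω', if X ω' = X ω then p ω' else 0 :=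
    Finset.single_le_sum (f := fun ω' => if X ω' = X ω then p ω' else 0)
      (fun ω' _ => by split <;> simp [hp ω']) (Finset.mem_univ ω)

lemma probEq_pos (p : Ω → ℝ) (hp : ∀ ω, 0 ≤ p ω) (X : Ω → α) (ω : Ω)
    (hω : p ω ≠ 0) : 0 < probEq p X (X ω) :=
  lt_of_lt_of_le (lt_of_le_of_ne (hp ω) (Ne.symm hω)) (le_probEq p hp X ω)

lemma probEq_congr (p : Ω → ℝ) {X : Ω → α} {X' : Ω → β} {a : α} {a' : β}
    (h : ∀ ω, X ω = a ↔ X' ω = a') : probEq p X a = probEq p X' a' :=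
  Finset.sum_congr rfl fun ω _ => by rw [if_congr (h ω) rfl rfl]

lemma probEq_mono (p : Ω → ℝ) (hp : ∀ ω, 0 ≤ p ω) {X : Ω → α} {Z : Ω → β} {a : α} {b : β}
    (h : ∀ ω, X ω = a → Z ω = b) : probEq p X a ≤ probEq p Z b := by
  refine Finset.sum_le_sum fun ω _ => ?_
  by_cases h1 : X ω = a
  · simp [h1, h ω h1]
  · simp only [h1, if_false]
    split <;> simp [hp ω]

lemma sum_image_ite {s : Finset δ} (Z : Ω → δ) (hs : ∀ ω, Z ω ∈ s) (g : Ω → ℝ) :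
    ∑ z ∈ s, ∑ ω, (if Z ω = z then g ω else 0) = ∑ ω, g ω := by
  rw [Finset.sum_comm]
  refine Finset.sum_congr rfl fun ω _ => ?_
  rw [Finset.sum_ite_eq]
  simp [hs ω]

lemma sum_probEq_mul (p : Ω → ℝ) {s : Finset δ} (Z : Ω → δ) (hs : ∀ ω, Z ω ∈ s) (g : δ → ℝ) :
    ∑ z ∈ s, probEq p Z z * g z = ∑ ω, p ω * g (Z ω) := by
  rw [← sum_image_ite Z hs (fun ω => p ω * g (Z ω))]
  refine Finset.sum_congr rfl fun z _ => ?_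
  rw [probEq, Finset.sum_mul]
  refine Finset.sum_congr rfl fun ω _ => ?_
  split_ifs with h
  · rw [h]
  · rw [zero_mul]

lemma sum_probEq (p : Ω → ℝ) {s : Finset δ} (Z : Ω → δ) (hs : ∀ ω, Z ω ∈ s) :
    ∑ z ∈ s, probEq p Z z = ∑ ω, p ω := by
  simpa using sum_probEq_mul p Z hs (fun _ => 1)

lemma p_eq_zero_of_probEq_eq_zero (p : Ω → ℝ) (hp : ∀ ω, 0 ≤ p ω) {W : Ω → γ} {c : γ}
    (h0 : probEq p W c = 0) {ω : Ω} (hω : W ω = c) : p ω = 0 := by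
  have := (Finset.sum_eq_zero_iff_of_nonneg (fun ω' _ => by
    split <;> simp [hp ω'])).mp h0 ω (Finset.mem_univ ω)
  simpa [hω] using this

lemma probEq_condOn (p : Ω → ℝ) (H : Ω → γ) (h : γ) (X : Ω → α) (x : α) :
    probEq (condOn p H h) X x
      = probEq p (fun ω => (X ω, H ω)) (x, h) / probEq p H h := by
  rw [probEq, probEq, Finset.sum_div]
  refine Finset.sum_congr rfl fun ω _ => ?_
  by_cases h1 : X ω = x <;> by_cases h2 : H ω = h <;>
    simp [condOn, h1, h2, Prod.ext_iff]

lemma condOn_nonneg (p : Ω → ℝ) (hp : ∀ ω, 0 ≤ p ω) (H : Ω → γ) (h : γ) (ω : Ω) :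
    0 ≤ condOn p H h ω := by
  refine div_nonneg ?_ (probEq_nonneg p hp H h)
  split <;> simp [hp ω]

lemma condOn_sum (p : Ω → ℝ) (H : Ω → γ) (h : γ) (hh : probEq p H h ≠ 0) :
    ∑ ω, condOn p H h ω = 1 := by
  simp only [condOn]
  rw [← Finset.sum_div, ← probEq, div_self hh]

lemma probEq_mul_pmfExp_condOn (p : Ω → ℝ) (hp : ∀ ω, 0 ≤ p ω) (H : Ω → γ) (h : γ)
    (f : Ω → ℝ) :
    probEq p H h * pmfExp (condOn p H h) f = ∑ ω, if H ω = h then p ω * f ω else 0 := by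
  by_cases hh : probEq p H h = 0
  · rw [hh, zero_mul]
    refine (Finset.sum_eq_zero fun ω _ => ?_).symm
    split_ifs with h1
    · rw [p_eq_zero_of_probEq_eq_zero p hp hh h1, zero_mul]
    · rfl
  · rw [pmfExp, Finset.mul_sum]
    refine Finset.sum_congr rfl fun ω _ => ?_
    rw [condOn]
    split_ifs with h1
    · field_simp
    · simp

lemma sum_condExp (p : Ω → ℝ) (hp : ∀ ω, 0 ≤ p ω) {s : Finset γ} (H : Ω → γ)
    (hs : ∀ ω, H ω ∈ s) (f : Ω → ℝ) :
    ∑ h ∈ s, probEq p H h * pmfExp (condOn p H h) f = pmfExp p f := by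
  rw [pmfExp, ← sum_image_ite H hs (fun ω => p ω * f ω)]
  exact Finset.sum_congr rfl fun h _ => probEq_mul_pmfExp_condOn p hp H h f

/-- Nonnegativity of mutual information. -/
theorem mutualInfo_nonneg (p : Ω → ℝ) (hp : ∀ ω, 0 ≤ p ω) (hpsum : ∑ ω, p ω = 1)
    (X : Ω → α) (Y : Ω → β) : 0 ≤ mutualInfo p X Y := by
  set Z : Ω → α × β := fun ω => (X ω, Y ω) with hZ
  set g : α × β → ℝ := fun z => Real.log (probEq p Z z / (probEq p X z.1 * probEq p Y z.2))
    with hg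
  have hmem : ∀ ω, Z ω ∈ Finset.univ.image Z :=
    fun ω => Finset.mem_image_of_mem Z (Finset.mem_univ ω)
  have hMI : mutualInfo p X Y = ∑ z ∈ Finset.univ.image Z, probEq p Z z * g z :=
    (sum_probEq_mul p Z hmem g).symm
  rw [hMI]
  have key : ∀ z ∈ Finset.univ.image Z,
      probEq p Z z - probEq p X z.1 * probEq p Y z.2 ≤ probEq p Z z * g z := by
    intro z hz
    obtain ⟨ω₀, -, hω₀⟩ := Finset.mem_image.mp hz
    set a := probEq p Z z with ha
    set b := probEq p X z.1 * probEq p Y z.2 with hb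
    have ha0 : 0 ≤ a := probEq_nonneg p hp Z z
    have hb0 : 0 ≤ b := mul_nonneg (probEq_nonneg p hp X _) (probEq_nonneg p hp Y _)
    rcases eq_or_lt_of_le ha0 with h0 | hpos
    · simp [← h0, hb0]
    · have haX : a ≤ probEq p X z.1 := by
        rw [ha]
        exact probEq_mono p hp fun ω hω => by rw [← hω₀] at hω ⊢; exact congrArg Prod.fst hω
      have haY : a ≤ probEq p Y z.2 :=
        probEq_mono p hp fun ω hω => by rw [← hω₀] at hω ⊢; exact congrArg Prod.snd hω
      have hbpos : 0 < b := by
        calc (0:ℝ) < a * a := mul_pos hpos hpos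
        _ ≤ b := mul_le_mul haX haY ha0 (probEq_nonneg p hp X _)
      have hlog : Real.log (b / a) ≤ b / a - 1 :=
        Real.log_le_sub_one_of_pos (div_pos hbpos hpos)
      have hglog : g z = - Real.log (b / a) := by
        rw [hg]; dsimp only
        rw [← ha, ← hb, ← Real.log_inv, inv_div]
      rw [hglog]
      have := mul_le_mul_of_nonneg_left hlog (le_of_lt hpos)
      have hab : a * (b / a) = b := by field_simp
      nlinarith
  calc (0:ℝ) = 1 - 1 := by ring
  _ ≤ (∑ z ∈ Finset.univ.image Z, probEq p Z z)
      - ∑ z ∈ Finset.univ.image Z, probEq p X z.1 * probEq p Y z.2 := by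
      rw [sum_probEq p Z hmem, hpsum]
      have hsub : Finset.univ.image Z ⊆ (Finset.univ.image X) ×ˢ (Finset.univ.image Y) := by
        intro z hz
        obtain ⟨ω₀, -, hω₀⟩ := Finset.mem_image.mp hz
        rw [Finset.mem_product, ← hω₀]
        constructor <;> [exact Finset.mem_image_of_mem X (Finset.mem_univ ω₀);
          exact Finset.mem_image_of_mem Y (Finset.mem_univ ω₀)]
      have h1 : ∑ z ∈ Finset.univ.image Z, probEq p X z.1 * probEq p Y z.2
          ≤ ∑ z ∈ (Finset.univ.image X) ×ˢ (Finset.univ.image Y),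
              probEq p X z.1 * probEq p Y z.2 :=
        Finset.sum_le_sum_of_subset_of_nonneg hsub fun z _ _ =>
          mul_nonneg (probEq_nonneg p hp X _) (probEq_nonneg p hp Y _)
      have h2 : ∑ z ∈ (Finset.univ.image X) ×ˢ (Finset.univ.image Y),
          probEq p X z.1 * probEq p Y z.2 = 1 := by
        rw [Finset.sum_product]
        dsimp only
        simp_rw [← Finset.mul_sum]
        rw [sum_probEq p Y (fun ω => Finset.mem_image_of_mem Y (Finset.mem_univ ω)), hpsum]
        simp_rw [mul_one]
        rw [sum_probEq p X (fun ω => Finset.mem_image_of_mem X (Finset.mem_univ ω)), hpsum]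
      linarith
  _ = ∑ z ∈ Finset.univ.image Z, (probEq p Z z - probEq p X z.1 * probEq p Y z.2) := by
      rw [Finset.sum_sub_distrib]
  _ ≤ _ := Finset.sum_le_sum key

/-- Mutual information is at most entropy. -/
theorem mutualInfo_le_entropy (p : Ω → ℝ) (hp : ∀ ω, 0 ≤ p ω)
    (X : Ω → α) (Z : Ω → β) : mutualInfo p X Z ≤ entropyOf p X := by
  have : entropyOf p X = ∑ ω, p ω * (- Real.log (probEq p X (X ω))) := by
    rw [entropyOf, ← Finset.sum_neg_distrib]
    exact Finset.sum_congr rfl fun ω _ => by ring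
  rw [this, mutualInfo]
  refine Finset.sum_le_sum fun ω _ => ?_
  by_cases hω : p ω = 0
  · simp [hω]
  · have hx : 0 < probEq p X (X ω) := probEq_pos p hp X ω hω
    have hz : 0 < probEq p Z (Z ω) := probEq_pos p hp Z ω hω
    have hj : 0 < probEq p (fun ω' => (X ω', Z ω')) (X ω, Z ω) :=
      probEq_pos p hp (fun ω' => (X ω', Z ω')) ω hω
    have hjz : probEq p (fun ω' => (X ω', Z ω')) (X ω, Z ω) ≤ probEq p Z (Z ω) :=
      probEq_mono p hp fun ω' hω' => congrArg Prod.snd hω'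
    refine mul_le_mul_of_nonneg_left ?_ (hp ω)
    rw [← Real.log_inv]
    refine Real.log_le_log (div_pos hj (mul_pos hx hz)) ?_
    rw [div_le_iff₀ (mul_pos hx hz)]
    calc probEq p (fun ω' => (X ω', Z ω')) (X ω, Z ω) ≤ probEq p Z (Z ω) := hjz
    _ = (probEq p X (X ω))⁻¹ * (probEq p X (X ω) * probEq p Z (Z ω)) := by
        field_simp
  done

/-- Chain rule. -/
theorem chain_rule (p : Ω → ℝ) (hp : ∀ ω, 0 ≤ p ω)
    (X : Ω → α) (Y : Ω → β) (W : Ω → γ) :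
    mutualInfo p X (fun ω => (Y ω, W ω)) = mutualInfo p X W + condMutualInfo p X Y W := by
  rw [mutualInfo, mutualInfo, condMutualInfo, ← Finset.sum_add_distrib]
  refine Finset.sum_congr rfl fun ω _ => ?_
  by_cases hω : p ω = 0
  · simp [hω]
  · rw [← mul_add]
    congr 1
    have hx := probEq_pos p hp X ω hω
    have hw := probEq_pos p hp W ω hω
    have hyw := probEq_pos p hp (fun ω' => (Y ω', W ω')) ω hω
    have hxw := probEq_pos p hp (fun ω' => (X ω', W ω')) ω hω
    have hxyw := probEq_pos p hp (fun ω' => (X ω', Y ω', W ω')) ω hω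
    rw [← Real.log_mul (by positivity) (by positivity)]
    congr 1
    field_simp
  done

/-- Mutual information with a constant is zero. -/
theorem mutualInfo_const (p : Ω → ℝ) (hp : ∀ ω, 0 ≤ p ω) (hpsum : ∑ ω, p ω = 1)
    (X : Ω → α) (c : β) : mutualInfo p X (fun _ => c) = 0 := by
  rw [mutualInfo]
  refine Finset.sum_eq_zero fun ω _ => ?_
  by_cases hω : p ω = 0
  · simp [hω]
  · have h1 : probEq p (fun _ : Ω => c) c = 1 := by
      rw [probEq]; simpa using hpsum
    have h2 : probEq p (fun ω' => (X ω', c)) (X ω, c) = probEq p X (X ω) :=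
      probEq_congr p fun ω' => by simp [Prod.ext_iff]
    rw [h1, h2, mul_one, div_self (ne_of_gt (probEq_pos p hp X ω hω)), Real.log_one, mul_zero]

/-- Fiber-congruence for mutual information. -/
theorem mutualInfo_congr (p : Ω → ℝ) (X : Ω → α) {Z : Ω → β} {Z' : Ω → γ}
    (hZ : ∀ ω₁ ω₂, Z ω₁ = Z ω₂ ↔ Z' ω₁ = Z' ω₂) :
    mutualInfo p X Z = mutualInfo p X Z' := by
  rw [mutualInfo, mutualInfo]
  refine Finset.sum_congr rfl fun ω _ => ?_
  have h1 : probEq p Z (Z ω) = probEq p Z' (Z' ω) := probEq_congr p fun ω' => hZ ω' ω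
  have h2 : probEq p (fun ω' => (X ω', Z ω')) (X ω, Z ω)
      = probEq p (fun ω' => (X ω', Z' ω')) (X ω, Z' ω) :=
    probEq_congr p fun ω' => by
      simp only [Prod.mk.injEq]
      exact and_congr_right fun _ => hZ ω' ω
  rw [h1, h2]

/-- Tower property: the conditional mutual information is the average of the
mutual informations of the conditioned pmfs. -/
theorem tower (p : Ω → ℝ) (hp : ∀ ω, 0 ≤ p ω) {s : Finset γ} (X : Ω → α) (Y : Ω → β)
    (H : Ω → γ) (hs : ∀ ω, H ω ∈ s) :
    ∑ h ∈ s, probEq p H h * mutualInfo (condOn p H h) X Y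
      = condMutualInfo p X Y H := by
  classical
  set g : Ω → ℝ := fun ω => Real.log
    ((probEq p (fun ω' => (X ω', Y ω', H ω')) (X ω, Y ω, H ω) * probEq p H (H ω)) /
      (probEq p (fun ω' => (X ω', H ω')) (X ω, H ω) *
        probEq p (fun ω' => (Y ω', H ω')) (Y ω, H ω))) with hgdef
  have step1 : ∀ h, mutualInfo (condOn p H h) X Y = pmfExp (condOn p H h) g := by
    intro h
    rw [mutualInfo, pmfExp]
    refine Finset.sum_congr rfl fun ω _ => ?_
    by_cases hc : condOn p H h ω = 0
    · rw [hc, zero_mul, zero_mul]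
    · have hPh : probEq p H h ≠ 0 := by
        intro h0; apply hc; rw [condOn, h0, div_zero]
      have hHω : H ω = h := by
        by_contra hne; apply hc; rw [condOn, if_neg hne, zero_div]
      have hpω : p ω ≠ 0 := by
        intro h0; apply hc; simp [condOn, h0]
      congr 1
      have e1 : probEq (condOn p H h) X (X ω)
          = probEq p (fun ω' => (X ω', H ω')) (X ω, H ω) / probEq p H (H ω) := by
        rw [probEq_condOn, hHω]
      have e2 : probEq (condOn p H h) Y (Y ω)
          = probEq p (fun ω' => (Y ω', H ω')) (Y ω, H ω) / probEq p H (H ω) := by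
        rw [probEq_condOn, hHω]
      have e3 : probEq (condOn p H h) (fun ω' => (X ω', Y ω')) (X ω, Y ω)
          = probEq p (fun ω' => (X ω', Y ω', H ω')) (X ω, Y ω, H ω) / probEq p H (H ω) := by
        rw [probEq_condOn p H h (fun ω' => (X ω', Y ω')) (X ω, Y ω), hHω]
        congr 1
        exact probEq_congr p fun ω' => by simp [Prod.ext_iff, and_assoc]
      rw [e1, e2, e3, hgdef]
      have hPh' : probEq p H (H ω) ≠ 0 := by rw [hHω]; exact hPh
      have hxw : probEq p (fun ω' => (X ω', H ω')) (X ω, H ω) ≠ 0 :=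
        ne_of_gt (probEq_pos p hp _ ω hpω)
      have hyw : probEq p (fun ω' => (Y ω', H ω')) (Y ω, H ω) ≠ 0 :=
        ne_of_gt (probEq_pos p hp _ ω hpω)
      congr 1
      field_simp
  calc ∑ h ∈ s, probEq p H h * mutualInfo (condOn p H h) X Y
      = ∑ h ∈ s, probEq p H h * pmfExp (condOn p H h) g := by
        exact Finset.sum_congr rfl fun h _ => by rw [step1]
  _ = pmfExp p g := sum_condExp p hp H hs g
  _ = condMutualInfo p X Y H := rfl

/-- The history truncated at time `k : ℕ`. -/
def hist {T : ℕ} {E : Type*} (Y : Fin T → Ω → E) (k : ℕ) (ω : Ω) : Fin T → Option E :=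
  fun s => if (s : ℕ) < k then some (Y s ω) else none

lemma hist_fiber {T : ℕ} {E : Type*} (Y : Fin T → Ω → E) (t : Fin T) (ω₁ ω₂ : Ω) :
    hist Y ((t : ℕ) + 1) ω₁ = hist Y ((t : ℕ) + 1) ω₂ ↔
      (Y t ω₁, hist Y (t : ℕ) ω₁) = (Y t ω₂, hist Y (t : ℕ) ω₂) := by
  constructor
  · intro h
    have h1 : ∀ s : Fin T, (if (s : ℕ) < (t : ℕ) + 1 then some (Y s ω₁) else none)
        = (if (s : ℕ) < (t : ℕ) + 1 then some (Y s ω₂) else none) := fun s => congrFun h s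
    rw [Prod.mk.injEq]
    constructor
    · have := h1 t
      rw [if_pos (Nat.lt_succ_self _), if_pos (Nat.lt_succ_self _)] at this
      exact Option.some.inj this
    · funext s
      show (if (s : ℕ) < (t : ℕ) then some (Y s ω₁) else none)
          = (if (s : ℕ) < (t : ℕ) then some (Y s ω₂) else none)
      by_cases hs : (s : ℕ) < (t : ℕ)
      · have := h1 s
        rw [if_pos (Nat.lt_succ_of_lt hs), if_pos (Nat.lt_succ_of_lt hs)] at this
        rw [if_pos hs, if_pos hs]
        exact this
      · rw [if_neg hs, if_neg hs]
  · intro h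
    obtain ⟨hY, hH⟩ := Prod.mk.injEq .. |>.mp h
    funext s
    show (if (s : ℕ) < (t : ℕ) + 1 then some (Y s ω₁) else none)
        = (if (s : ℕ) < (t : ℕ) + 1 then some (Y s ω₂) else none)
    by_cases hs : (s : ℕ) < (t : ℕ) + 1
    · rw [if_pos hs, if_pos hs]
      rcases Nat.lt_succ_iff_lt_or_eq.mp hs with hlt | heq
    
      · have := congrFun hH s
        simp only [hist] at this
        rw [if_pos hlt, if_pos hlt] at this
        exact this
      · have hst : s = t := Fin.ext heq
        subst hst
        rw [hY]
    · rw [if_neg hs, if_neg hs]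

lemma hist_zero {T : ℕ} {E : Type*} (Y : Fin T → Ω → E) :
    hist Y 0 = fun _ => (fun _ => none : Fin T → Option E) := by
  funext ω s
  simp [hist]

end RVR

open RVR in
/-- Russo–Van Roy regret bound for Thompson sampling: if the information ratio is bounded,
i.e. for every round `t` and every history `h` of positive probability the squared
expected one-step regret is at most `Γ` times the information gained about the optimal
arm `A*` from `(A_t, Y_{t,A_t})`, then the Bayesian regret after `T` rounds is at most
`√(Γ · H(α₁) · T)`, where `H(α₁)` is the entropy of the prior distribution of `A*`. -/
theorem bayesian_regret_le_sqrt_of_information_ratio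
    {Ω Arm 𝒪 : Type*} [Fintype Ω] [Fintype Arm]
    (p : Ω → ℝ) (hp : ∀ ω, 0 ≤ p ω) (hpsum : ∑ ω, p ω = 1)
    (T : ℕ) (Astar : Ω → Arm) (At : Fin T → Ω → Arm) (O : Fin T → Ω → 𝒪)
    (rstar r : Fin T → Ω → ℝ) (Γ : ℝ) (hΓ : 0 ≤ Γ)
    (hratio : ∀ (t : Fin T) (h : Fin T → Option (Arm × 𝒪)),
      probEq p (history (fun s ω => (At s ω, O s ω)) t) h ≠ 0 →
      (pmfExp (condOn p (history (fun s ω => (At s ω, O s ω)) t) h)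
          (fun ω => rstar t ω - r t ω)) ^ 2 ≤
        Γ * mutualInfo (condOn p (history (fun s ω => (At s ω, O s ω)) t) h)
          Astar (fun ω => (At t ω, O t ω))) :
    ∑ t : Fin T, pmfExp p (fun ω => rstar t ω - r t ω) ≤
      Real.sqrt (Γ * entropyOf p Astar * T) := by
  -- the observation process and its history
  set Y : Fin T → Ω → Arm × 𝒪 := fun s ω => (At s ω, O s ω) with hY
  have hh : ∀ t : Fin T, history (fun s ω => (At s ω, O s ω)) t = hist Y (t : ℕ) :=
    fun t => rfl
  have hh' : ∀ t : Fin T, history Y t = hist Y (t : ℕ) := fun t => rfl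
  simp only [hh, hh'] at hratio
  -- information about Astar contained in the history at time k
  set F : ℕ → ℝ := fun k => mutualInfo p Astar (hist Y k) with hF
  set H : ℝ := entropyOf p Astar with hHdef
  -- chain rule step
  have hstep : ∀ t : Fin T,
      condMutualInfo p Astar (fun ω => (At t ω, O t ω)) (hist Y (t : ℕ))
        = F ((t : ℕ) + 1) - F (t : ℕ) := by
    intro t
    have hcongr : F ((t : ℕ) + 1)
        = mutualInfo p Astar (fun ω => ((At t ω, O t ω), hist Y (t : ℕ) ω)) := by
      exact mutualInfo_congr p Astar (fun ω₁ ω₂ => hist_fiber Y t ω₁ ω₂)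
    have hchain : mutualInfo p Astar (fun ω => ((At t ω, O t ω), hist Y (t : ℕ) ω))
        = F (t : ℕ) + condMutualInfo p Astar (fun ω => (At t ω, O t ω)) (hist Y (t : ℕ)) := by
      exact chain_rule p hp Astar (fun ω => (At t ω, O t ω)) (hist Y (t : ℕ))
    rw [hcongr] at *
    linarith [hchain]
  have hF0 : F 0 = 0 := by
    rw [hF]
    dsimp only
    rw [hist_zero Y]
    exact mutualInfo_const p hp hpsum Astar _
  have hFT0 : 0 ≤ F T := mutualInfo_nonneg p hp hpsum Astar (hist Y T)
  have hFTH : F T ≤ H := mutualInfo_le_entropy p hp Astar (hist Y T)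
  have hH0 : 0 ≤ H := le_trans hFT0 hFTH
  -- the finsets of possible histories, and the sigma type for Cauchy-Schwarz
  set S : Fin T → Finset (Fin T → Option (Arm × 𝒪)) :=
    fun t => Finset.univ.image (hist Y (t : ℕ)) with hS
  have hmem : ∀ t : Fin T, ∀ ω, hist Y (t : ℕ) ω ∈ S t :=
    fun t ω => Finset.mem_image_of_mem _ (Finset.mem_univ ω)
  set P : Fin T → (Fin T → Option (Arm × 𝒪)) → ℝ :=
    fun t h => probEq p (hist Y (t : ℕ)) h with hP
  set MI : Fin T → (Fin T → Option (Arm × 𝒪)) → ℝ :=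
    fun t h => mutualInfo (condOn p (hist Y (t : ℕ)) h) Astar (fun ω => (At t ω, O t ω))
    with hMI
  have hPnn : ∀ t h, 0 ≤ P t h := fun t h => probEq_nonneg p hp _ h
  have hgnn : ∀ t h, 0 ≤ P t h * (Γ * MI t h) := by
    intro t h
    by_cases h0 : P t h = 0
    · rw [h0, zero_mul]
    · refine mul_nonneg (hPnn t h) (mul_nonneg hΓ ?_)
      exact mutualInfo_nonneg _ (condOn_nonneg p hp _ h) (condOn_sum p _ h h0) _ _
  -- pointwise bound from the information-ratio assumption
  have hpoint : ∀ t : Fin T, ∀ h ∈ S t,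
      P t h * pmfExp (condOn p (hist Y (t : ℕ)) h) (fun ω => rstar t ω - r t ω)
        ≤ Real.sqrt (P t h) * Real.sqrt (P t h * (Γ * MI t h)) := by
    intro t h _
    by_cases h0 : P t h = 0
    · simp [h0]
    · have hPpos : 0 < P t h := lt_of_le_of_ne (hPnn t h) (Ne.symm h0)
      have hE : pmfExp (condOn p (hist Y (t : ℕ)) h) (fun ω => rstar t ω - r t ω)
          ≤ Real.sqrt (Γ * MI t h) := by
        refine le_trans (le_abs_self _) ?_
        rw [← Real.sqrt_sq_eq_abs]
        exact Real.sqrt_le_sqrt (hratio t h h0)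
      calc P t h * pmfExp (condOn p (hist Y (t : ℕ)) h) (fun ω => rstar t ω - r t ω)
          ≤ P t h * Real.sqrt (Γ * MI t h) := mul_le_mul_of_nonneg_left hE hPpos.le
      _ = Real.sqrt (P t h) * Real.sqrt (P t h) * Real.sqrt (Γ * MI t h) := by
          rw [Real.mul_self_sqrt hPpos.le]
      _ = Real.sqrt (P t h) * Real.sqrt (P t h * (Γ * MI t h)) := by
          rw [mul_assoc, ← Real.sqrt_mul hPpos.le]
  -- sums over the sigma finset
  set σF : Finset ((_ : Fin T) × (Fin T → Option (Arm × 𝒪))) :=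
    Finset.univ.sigma (fun t => S t) with hσF
  have hsum1 : ∑ i ∈ σF, P i.1 i.2 = T := by
    rw [hσF, Finset.sum_sigma]
    have : ∀ t : Fin T, ∑ h ∈ S t, P t h = 1 := by
      intro t
      rw [sum_probEq p (hist Y (t : ℕ)) (hmem t), hpsum]
    rw [Finset.sum_congr rfl fun t _ => this t]
    simp
  have hsum2 : ∑ i ∈ σF, P i.1 i.2 * (Γ * MI i.1 i.2) = Γ * F T := by
    rw [hσF, Finset.sum_sigma]
    have hinner : ∀ t : Fin T, ∑ h ∈ S t, P t h * (Γ * MI t h)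
        = Γ * (F ((t : ℕ) + 1) - F (t : ℕ)) := by
      intro t
      have : ∀ h, P t h * (Γ * MI t h) = Γ * (P t h * MI t h) := fun h => by ring
      rw [Finset.sum_congr rfl fun h _ => this h, ← Finset.mul_sum]
      rw [tower p hp Astar (fun ω => (At t ω, O t ω)) (hist Y (t : ℕ)) (hmem t)]
      rw [hstep t]
    rw [Finset.sum_congr rfl fun t _ => hinner t, ← Finset.mul_sum]
    congr 1
    rw [Fin.sum_univ_eq_sum_range (fun i => F (i + 1) - F i) T, Finset.sum_range_sub F, hF0,
      sub_zero]
  -- assembling everything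
  calc ∑ t : Fin T, pmfExp p (fun ω => rstar t ω - r t ω)
      = ∑ t : Fin T, ∑ h ∈ S t,
          P t h * pmfExp (condOn p (hist Y (t : ℕ)) h) (fun ω => rstar t ω - r t ω) := by
        exact Finset.sum_congr rfl fun t _ =>
          (sum_condExp p hp (hist Y (t : ℕ)) (hmem t) _).symm
  _ = ∑ i ∈ σF, P i.1 i.2 *
        pmfExp (condOn p (hist Y (i.1 : ℕ)) i.2) (fun ω => rstar i.1 ω - r i.1 ω) := by
        rw [hσF, Finset.sum_sigma]
  _ ≤ ∑ i ∈ σF, Real.sqrt (P i.1 i.2) * Real.sqrt (P i.1 i.2 * (Γ * MI i.1 i.2)) := by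
        refine Finset.sum_le_sum fun i hi => ?_
        exact hpoint i.1 i.2 ((Finset.mem_sigma.mp hi).2)
  _ ≤ Real.sqrt (∑ i ∈ σF, P i.1 i.2) *
        Real.sqrt (∑ i ∈ σF, P i.1 i.2 * (Γ * MI i.1 i.2)) :=
        Real.sum_sqrt_mul_sqrt_le σF (fun i => hPnn i.1 i.2) (fun i => hgnn i.1 i.2)
  _ = Real.sqrt T * Real.sqrt (Γ * F T) := by rw [hsum1, hsum2]
  _ ≤ Real.sqrt T * Real.sqrt (Γ * H) := by
        refine mul_le_mul_of_nonneg_left (Real.sqrt_le_sqrt ?_) (Real.sqrt_nonneg _)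
        exact mul_le_mul_of_nonneg_left hFTH hΓ
  _ = Real.sqrt (Γ * H * T) := by
        rw [Real.sqrt_mul (mul_nonneg hΓ hH0) (T : ℝ), mul_comm]
end
end

section
/- Under Thompson sampling (the probability matching property P_t(A_t = a) = P_t(A* = a)), the conditional mutual information between A* and the full observation decomposes and lower-bounds: I_t(A*; (A_t, Y_{t,A_t})) ≥ Σ_{a} P_t(A_t = a) I_t(A*; Y_{t,a}). -/
open scoped Classical

noncomputable section

variable {Ω : Type*} [Fintype Ω]

section Aux

lemma sum_factor {Ω β : Type*} [Fintype Ω] [DecidableEq β] (φ : Ω → β) (c : Ω → ℝ) (g : β → ℝ) :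
    ∑ ω, c ω * g (φ ω) =
      ∑ v ∈ Finset.univ.image φ, (∑ ω, if φ ω = v then c ω else 0) * g v := by
  classical
  have h : ∀ ω : Ω, c ω * g (φ ω) =
      ∑ v ∈ Finset.univ.image φ, if φ ω = v then c ω * g v else 0 := by
    intro ω
    rw [Finset.sum_ite_eq]
    simp [Finset.mem_image_of_mem]
  simp_rw [h]
  rw [Finset.sum_comm]
  refine Finset.sum_congr rfl fun v _ => ?_
  rw [Finset.sum_mul]
  refine Finset.sum_congr rfl fun ω _ => ?_
  split <;> simp

lemma probEq_eq_sum {Ω β : Type*} [Fintype Ω] (p : Ω → ℝ) (φ : Ω → β) (v : β) :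
    probEq p φ v = ∑ ω, if φ ω = v then p ω else 0 := rfl

lemma probEq_eq_zero_of_not_mem {Ω β : Type*} [Fintype Ω] [DecidableEq β] (p : Ω → ℝ) (φ : Ω → β)
    (v : β) (hv : v ∉ Finset.univ.image φ) : probEq p φ v = 0 := by
  classical
  refine Finset.sum_eq_zero fun ω _ => ?_
  have : φ ω ≠ v := fun h => hv (h ▸ Finset.mem_image_of_mem φ (Finset.mem_univ ω))
  simp [this]

/-- Independence transfer: if `At` is independent of `ψ`, then averaging a function of
`(At, ψ)` equals first averaging over `ψ` for each fixed action, then over `At`. -/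
lemma indep_transfer {Ω Arm β : Type*} [Fintype Ω] [Fintype Arm]
    (p : Ω → ℝ) (At : Ω → Arm) (ψ : Ω → β)
    (hindep : ∀ (a : Arm) (v : β),
      probEq p (fun ω => (At ω, ψ ω)) (a, v) = probEq p At a * probEq p ψ v)
    (F : Arm → β → ℝ) :
    ∑ ω, p ω * F (At ω) (ψ ω) = ∑ a, probEq p At a * ∑ ω, p ω * F a (ψ ω) := by
  classical
  have h1 : ∑ ω, p ω * F (At ω) (ψ ω) =
      ∑ v ∈ Finset.univ.image (fun ω => (At ω, ψ ω)),
        probEq p (fun ω => (At ω, ψ ω)) v * F v.1 v.2 := by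
    refine (sum_factor (fun ω => (At ω, ψ ω)) p (fun v => F v.1 v.2)).trans ?_
    refine Finset.sum_congr rfl fun v _ => ?_
    congr 1
    all_goals
      refine Finset.sum_congr rfl fun ω _ => ?_
      by_cases h : (At ω, ψ ω) = v <;> simp [h]
  have hsub : Finset.univ.image (fun ω => (At ω, ψ ω)) ⊆
      (Finset.univ : Finset Arm) ×ˢ Finset.univ.image ψ := by
    intro v hv
    rcases Finset.mem_image.1 hv with ⟨ω, _, rfl⟩
    exact Finset.mem_product.2 ⟨Finset.mem_univ _, Finset.mem_image_of_mem _ (Finset.mem_univ ω)⟩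
  have h2 : ∑ v ∈ Finset.univ.image (fun ω => (At ω, ψ ω)),
        probEq p (fun ω => (At ω, ψ ω)) v * F v.1 v.2 =
      ∑ v ∈ (Finset.univ : Finset Arm) ×ˢ Finset.univ.image ψ,
        probEq p (fun ω => (At ω, ψ ω)) v * F v.1 v.2 := by
    refine Finset.sum_subset hsub fun v _ hv => ?_
    rw [probEq_eq_zero_of_not_mem p _ v hv, zero_mul]
  rw [h1, h2, Finset.sum_product]
  refine Finset.sum_congr rfl fun a _ => ?_
  have h3 : ∑ ω, p ω * F a (ψ ω) =
      ∑ v ∈ Finset.univ.image ψ, probEq p ψ v * F a v := by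
    refine (sum_factor ψ p (F a)).trans ?_
    refine Finset.sum_congr rfl fun v _ => ?_
    congr 1
    all_goals
      refine Finset.sum_congr rfl fun ω _ => ?_
      by_cases h : ψ ω = v <;> simp [h]
  rw [h3, Finset.mul_sum]
  refine Finset.sum_congr rfl fun v _ => ?_
  rw [hindep a v]
  try ring

end Aux

/-- Under the probability matching property of Thompson sampling (`A_t` identically
distributed with `A*` and independent of `(A*, Y)`), the information gained about `A*`
from the full observation lower-bounds the action-averaged information:
`I(A*; (A_t, Y_{A_t})) ≥ Σ_a P(A_t = a) · I(A*; Y_a)`. -/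
theorem mutualInfo_observation_ge_avg
    {Ω Arm 𝒪 : Type*} [Fintype Ω] [Fintype Arm]
    (p : Ω → ℝ) (hp : ∀ ω, 0 ≤ p ω) (hpsum : ∑ ω, p ω = 1)
    (Astar At : Ω → Arm) (Y : Ω → Arm → 𝒪)
    (hmatch : ∀ a : Arm, probEq p At a = probEq p Astar a)
    (hindep : ∀ (a b : Arm) (y : Arm → 𝒪),
      probEq p (fun ω => (At ω, Astar ω, Y ω)) (a, b, y) =
        probEq p At a * probEq p (fun ω => (Astar ω, Y ω)) (b, y)) :
    ∑ a : Arm, probEq p At a * mutualInfo p Astar (fun ω => Y ω a) ≤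
      mutualInfo p Astar (fun ω => (At ω, Y ω (At ω))) := by
  classical
  apply le_of_eq
  set ψ : Ω → Arm × (Arm → 𝒪) := fun ω => (Astar ω, Y ω) with hψdef
  have hind' : ∀ (a : Arm) (v : Arm × (Arm → 𝒪)),
      probEq p (fun ω => (At ω, ψ ω)) (a, v) = probEq p At a * probEq p ψ v :=
    fun a v => hindep a v.1 v.2
  -- Lemma A: joint factorization with A*
  have lemA : ∀ (b a : Arm) (z : 𝒪),
      probEq p (fun ω => (Astar ω, (At ω, Y ω (At ω)))) (b, (a, z)) =
        probEq p At a * probEq p (fun ω => (Astar ω, Y ω a)) (b, z) := by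
    intro b a z
    have h1 : probEq p (fun ω => (Astar ω, (At ω, Y ω (At ω)))) (b, (a, z)) =
        ∑ ω, p ω * (fun (a' : Arm) (v : Arm × (Arm → 𝒪)) =>
          if (v.1, (a', v.2 a')) = (b, (a, z)) then (1 : ℝ) else 0) (At ω) (ψ ω) := by
      refine Finset.sum_congr rfl fun ω _ => ?_
      by_cases h : (Astar ω, (At ω, Y ω (At ω))) = (b, (a, z)) <;> simp [hψdef, h]
    rw [h1, indep_transfer p At ψ hind' (fun (a' : Arm) (v : Arm × (Arm → 𝒪)) =>
          if (v.1, (a', v.2 a')) = (b, (a, z)) then (1 : ℝ) else 0)]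
    have h2 : ∀ a' : Arm,
        (∑ ω, p ω * (fun (a' : Arm) (v : Arm × (Arm → 𝒪)) =>
          if (v.1, (a', v.2 a')) = (b, (a, z)) then (1 : ℝ) else 0) a' (ψ ω)) =
        if a' = a then probEq p (fun ω => (Astar ω, Y ω a)) (b, z) else 0 := by
      intro a'
      by_cases ha : a' = a
      · subst ha
        rw [if_pos rfl, probEq_eq_sum]
        refine Finset.sum_congr rfl fun ω _ => ?_
        by_cases h1 : Astar ω = b <;> by_cases h2 : Y ω a' = z <;>
          simp [hψdef, Prod.ext_iff, h1, h2]
      · rw [if_neg ha]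
        refine Finset.sum_eq_zero fun ω _ => ?_
        simp [hψdef, Prod.ext_iff, ha]
    simp_rw [h2, mul_ite, mul_zero]
    rw [Finset.sum_ite_eq' Finset.univ a
      (fun a' => probEq p At a' * probEq p (fun ω => (Astar ω, Y ω a)) (b, z))]
    simp
  -- Lemma B: factorization of (At, Y_{At})
  have lemB : ∀ (a : Arm) (z : 𝒪),
      probEq p (fun ω => (At ω, Y ω (At ω))) (a, z) =
        probEq p At a * probEq p (fun ω => Y ω a) z := by
    intro a z
    have h1 : probEq p (fun ω => (At ω, Y ω (At ω))) (a, z) =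
        ∑ ω, p ω * (fun (a' : Arm) (v : Arm × (Arm → 𝒪)) =>
          if (a', v.2 a') = (a, z) then (1 : ℝ) else 0) (At ω) (ψ ω) := by
      refine Finset.sum_congr rfl fun ω _ => ?_
      by_cases h : (At ω, Y ω (At ω)) = (a, z) <;> simp [hψdef, h]
    rw [h1, indep_transfer p At ψ hind' (fun (a' : Arm) (v : Arm × (Arm → 𝒪)) =>
          if (a', v.2 a') = (a, z) then (1 : ℝ) else 0)]
    have h2 : ∀ a' : Arm,
        (∑ ω, p ω * (fun (a' : Arm) (v : Arm × (Arm → 𝒪)) =>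
          if (a', v.2 a') = (a, z) then (1 : ℝ) else 0) a' (ψ ω)) =
        if a' = a then probEq p (fun ω => Y ω a) z else 0 := by
      intro a'
      by_cases ha : a' = a
      · subst ha
        rw [if_pos rfl, probEq_eq_sum]
        refine Finset.sum_congr rfl fun ω _ => ?_
        by_cases h2 : Y ω a' = z <;> simp [hψdef, Prod.ext_iff, h2]
      · rw [if_neg ha]
        refine Finset.sum_eq_zero fun ω _ => ?_
        simp [hψdef, Prod.ext_iff, ha]
    simp_rw [h2, mul_ite, mul_zero]
    rw [Finset.sum_ite_eq' Finset.univ a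
      (fun a' => probEq p At a' * probEq p (fun ω => Y ω a) z)]
    simp
  -- rewrite the right-hand mutual information term-by-term
  have hRHS : mutualInfo p Astar (fun ω => (At ω, Y ω (At ω))) =
      ∑ ω, p ω * (fun (a : Arm) (v : Arm × (Arm → 𝒪)) =>
        Real.log (probEq p (fun ω' => (Astar ω', Y ω' a)) (v.1, v.2 a) /
          (probEq p Astar v.1 * probEq p (fun ω' => Y ω' a) (v.2 a)))) (At ω) (ψ ω) := by
    unfold mutualInfo
    refine Finset.sum_congr rfl fun ω _ => ?_
    by_cases hpω : p ω = 0
    · simp [hpω]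
    have hc : probEq p At (At ω) ≠ 0 := by
      have h1 : p ω ≤ probEq p At (At ω) := by
        have := Finset.single_le_sum (f := fun ω' => if At ω' = At ω then p ω' else 0)
          (fun ω' _ => by split <;> [exact hp ω'; exact le_rfl]) (Finset.mem_univ ω)
        simpa [probEq_eq_sum] using this
      have h2 : 0 < p ω := lt_of_le_of_ne (hp ω) (Ne.symm hpω)
      exact ne_of_gt (lt_of_lt_of_le h2 h1)
    simp only [hψdef]
    rw [lemA, lemB]
    rw [show probEq p Astar (Astar ω) *
        (probEq p At (At ω) * probEq p (fun ω' => Y ω' (At ω)) (Y ω (At ω))) =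
        probEq p At (At ω) *
        (probEq p Astar (Astar ω) * probEq p (fun ω' => Y ω' (At ω)) (Y ω (At ω))) by ring]
    rw [mul_div_mul_left _ _ hc]
  rw [hRHS, indep_transfer p At ψ hind' (fun (a : Arm) (v : Arm × (Arm → 𝒪)) =>
        Real.log (probEq p (fun ω' => (Astar ω', Y ω' a)) (v.1, v.2 a) /
          (probEq p Astar v.1 * probEq p (fun ω' => Y ω' a) (v.2 a))))]
  refine Finset.sum_congr rfl fun a _ => ?_
  rfl
end
end
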